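/- arXiv:2109.06683 — 3 statements merged into one kernel-verified Lean document; each statement's English description precedes it below -/
import Mathlib

section
/- Assume N = 1 and Q satisfies (H-EL). Let u₀ ∈ 𝒜 and let u be a solution of (P_{u₀}) with supp u = [−r̄, r̄], r̄ < ∞, and u' < 0 on (0, r̄). Then u(x) / ((A(m+1)²/2)^{1/(m+1)}·(r̄ − x)^{2/(m+1)}) → 1 as x → r̄⁻, and u'(x) / (−(2/(m+1))·(A(m+1)²/2)^{1/(m+1)}·(r̄ − x)^{(1−m)/(m+1)}) → 1 as x → r̄⁻; in particular ∫_{−r̄}^{r̄} u'(x)² dx < ∞. -/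
open MeasureTheory Filter Set

noncomputable section

/-- Hypothesis (H): `Q` is continuous on `(0,∞)`, vanishes on `(-∞,0]`, is bounded below,
and `Q(s) ~ A·s^(1-m)` as `s → 0⁺`. -/
def HypH (Q : ℝ → ℝ) (A m : ℝ) : Prop :=
  ContinuousOn Q (Set.Ioi 0) ∧ (∀ s : ℝ, s ≤ 0 → Q s = 0) ∧ BddBelow (Set.range Q) ∧
  0 < A ∧ 1 < m ∧
  Filter.Tendsto (fun s : ℝ => Q s / (A * s ^ (1 - m))) (nhdsWithin 0 (Set.Ioi 0)) (nhds 1)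

/-- `Q` is C¹ on `(0,∞)`. -/
def HypC1 (Q : ℝ → ℝ) : Prop :=
  (∀ s : ℝ, 0 < s → DifferentiableAt ℝ Q s) ∧ ContinuousOn (deriv Q) (Set.Ioi 0)

/-- Hypothesis (H-EL1): (H) with `1 < m < 3` and `Q` of class C¹ on `(0,∞)`. -/
def HypHEL1 (Q : ℝ → ℝ) (A m : ℝ) : Prop := HypH Q A m ∧ m < 3 ∧ HypC1 Q

/-- Hypothesis (H-EL): (H-EL1) together with `|s·Q'(s)| ≤ C·Q(s)` for `s` small. -/
def HypHEL (Q : ℝ → ℝ) (A m : ℝ) : Prop :=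
  HypHEL1 Q A m ∧ ∃ C > (0:ℝ), ∃ s₀ > (0:ℝ), ∀ s : ℝ, 0 < s → s < s₀ →
    |s * deriv Q s| ≤ C * Q s

/-- `R(s) = Q(s)/s`. -/
def Rfun (Q : ℝ → ℝ) : ℝ → ℝ := fun s => Q s / s

/-- Hypothesis (H-R): `R' ≠ 0` on `(0,δ) ∪ (1/δ,∞)` for some `δ ∈ (0,1)`. -/
def HypHR (Q : ℝ → ℝ) : Prop :=
  ∃ δ : ℝ, 0 < δ ∧ δ < 1 ∧ ∀ s : ℝ, (0 < s ∧ s < δ) ∨ 1/δ < s → deriv (Rfun Q) s ≠ 0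

/-- `u ∈ H¹(ℝ)` with weak derivative `g`: `u` is continuous, `u, g ∈ L²`, and the
fundamental theorem of calculus holds. -/
def MemH1 (u g : ℝ → ℝ) : Prop :=
  Continuous u ∧ MeasureTheory.MemLp u 2 MeasureTheory.volume ∧
  MeasureTheory.MemLp g 2 MeasureTheory.volume ∧
  ∀ a b : ℝ, a ≤ b → u b - u a = ∫ t in a..b, g t

/-- `u ∈ D_M` (with weak derivative `g`): `u ∈ H¹(ℝ)`, `u ≥ 0`, `∫ u = M`. -/
def InD (M : ℝ) (u g : ℝ → ℝ) : Prop :=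
  MemH1 u g ∧ (∀ x, 0 ≤ u x) ∧ (∫ x, u x) = M

/-- The energy `E[u] = ∫ (½ u'² + Q(u))`. -/
def Energy (Q u g : ℝ → ℝ) : ℝ := ∫ x, ((1/2) * (g x)^2 + Q (u x))

/-- `u` is a (global) minimizer of `E` in `D_M`. -/
def IsMinimizer (Q : ℝ → ℝ) (M : ℝ) (u : ℝ → ℝ) : Prop :=
  ∃ g, InD M u g ∧ MeasureTheory.Integrable (fun x => Q (u x)) ∧
    ∀ v h, InD M v h → MeasureTheory.Integrable (fun x => Q (v x)) →
      Energy Q u g ≤ Energy Q v h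

/-- The admissible set `𝒜 = {s > 0 : R'(s) < 0 and R(t) > R(s) for all 0 < t < s}`. -/
def Aset (Q : ℝ → ℝ) : Set ℝ :=
  {s : ℝ | 0 < s ∧ deriv (Rfun Q) s < 0 ∧ ∀ t, 0 < t → t < s → Rfun Q s < Rfun Q t}

/-- `e` is the smallest global minimum point of `R` on `(0,∞)` (so `e_* = e < ∞`). -/
def IsEStar (Q : ℝ → ℝ) (e : ℝ) : Prop :=
  0 < e ∧ (∀ t, 0 < t → Rfun Q e ≤ Rfun Q t) ∧
    ∀ s, 0 < s → (∀ t, 0 < t → Rfun Q s ≤ Rfun Q t) → e ≤ s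

/-- `R` attains no global minimum on `(0,∞)` (so `e_* = +∞`). -/
def EStarInfinite (Q : ℝ → ℝ) : Prop :=
  ¬ ∃ s : ℝ, 0 < s ∧ ∀ t, 0 < t → Rfun Q s ≤ Rfun Q t

/-- A solution of problem `(P_{u₀})`: nonnegative, even, continuous, with positivity set
`(-r̄, r̄)` (`r̄ ∈ (0,+∞]`), C² there, solving `-u'' + Q'(u) = R(u₀)`, `u(0) = u₀`, `u'(0) = 0`. -/
def IsPSol (Q : ℝ → ℝ) (u₀ : ℝ) (u : ℝ → ℝ) (r : EReal) : Prop :=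
  0 < r ∧ (∀ x, 0 ≤ u x) ∧ (∀ x, u (-x) = u x) ∧ Continuous u ∧
  {x : ℝ | 0 < u x} = {x : ℝ | -r < (x : EReal) ∧ (x : EReal) < r} ∧
  ContDiffOn ℝ 2 u {x : ℝ | 0 < u x} ∧
  (∀ x : ℝ, -r < (x : EReal) → (x : EReal) < r →
    -(deriv (deriv u) x) + deriv Q (u x) = Rfun Q u₀) ∧
  u 0 = u₀ ∧ deriv u 0 = 0
set_option maxHeartbeats 2000000 in
/-- Asymptotics near the contact line: for `u₀ ∈ 𝒜` and `u` the solution of `(P_{u₀})`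
with support `[-r̄,r̄]` and `u' < 0` on `(0,r̄)`,
`u(x) ~ (A(m+1)²/2)^{1/(m+1)} (r̄-x)^{2/(m+1)}` and
`u'(x) ~ -(2/(m+1))(A(m+1)²/2)^{1/(m+1)} (r̄-x)^{2/(m+1)-1}` as `x → r̄⁻`;
in particular `∫_{-r̄}^{r̄} u'² < ∞`. -/
theorem stmt8 (Q : ℝ → ℝ) (A m : ℝ) (hQ : HypHEL Q A m)
    (u₀ : ℝ) (hu₀ : u₀ ∈ Aset Q) (u : ℝ → ℝ) (r : ℝ) (hr : 0 < r)
    (hsol : IsPSol Q u₀ u (r : EReal)) (hsupp : tsupport u = Set.Icc (-r) r)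
    (hdec : ∀ x ∈ Set.Ioo 0 r, deriv u x < 0) :
    Filter.Tendsto
      (fun x => u x / ((A * (m+1)^2 / 2) ^ ((1:ℝ)/(m+1)) * (r - x) ^ ((2:ℝ)/(m+1))))
      (nhdsWithin r (Set.Iio r)) (nhds 1) ∧
    Filter.Tendsto
      (fun x => deriv u x /
        (-(2/(m+1)) * (A * (m+1)^2 / 2) ^ ((1:ℝ)/(m+1)) * (r - x) ^ ((1-m)/(m+1))))
      (nhdsWithin r (Set.Iio r)) (nhds 1) ∧
    MeasureTheory.IntegrableOn (fun x => (deriv u x)^2) (Set.Ioo (-r) r) := by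
  obtain ⟨⟨⟨hQcont, hQzero, hQbdd, hA, hm, hQasymp⟩, hm3, hQdiff, hQ'cont⟩, -⟩ := hQ
  obtain ⟨hu0pos, -, -⟩ := hu₀
  obtain ⟨-, hunn, heven, hucont, hpos, hC2, hODE, hu0, hu'0⟩ := hsol
  have hm1 : (0:ℝ) < m + 1 := by linarith
  -- the positivity set is `Ioo (-r) r`
  have hSet : {x : ℝ | 0 < u x} = Set.Ioo (-r) r := by
    rw [hpos]; ext x
    simp only [Set.mem_setOf_eq, Set.mem_Ioo, ← EReal.coe_neg, EReal.coe_lt_coe_iff]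
  have hupos : ∀ x ∈ Set.Ioo (-r) r, 0 < u x := by
    intro x hx; rw [← hSet] at hx; exact hx
  have hur : u r = 0 := by
    have h1 : r ∉ Set.Ioo (-r) r := by simp
    rw [← hSet] at h1
    exact le_antisymm (not_lt.mp h1) (hunn r)
  have hC2' : ContDiffOn ℝ 2 u (Set.Ioo (-r) r) := hSet ▸ hC2
  have hder : ∀ x ∈ Set.Ioo (-r) r, HasDerivAt u (deriv u x) x := by
    intro x hx
    exact ((hC2'.differentiableOn (by norm_num)).differentiableAt
      (isOpen_Ioo.mem_nhds hx)).hasDerivAt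
  have hC1d : ContDiffOn ℝ 1 (deriv u) (Set.Ioo (-r) r) := by
    have h21 : ContDiffOn ℝ (1 + 1) u (Set.Ioo (-r) r) := by norm_num; exact hC2'
    exact ((contDiffOn_succ_iff_deriv_of_isOpen isOpen_Ioo).mp h21).2.2
  have hder2 : ∀ x ∈ Set.Ioo (-r) r, HasDerivAt (deriv u) (deriv (deriv u) x) x := by
    intro x hx
    exact ((hC1d.differentiableOn one_ne_zero).differentiableAt
      (isOpen_Ioo.mem_nhds hx)).hasDerivAt
  have hdcont : ContinuousOn (deriv u) (Set.Ioo (-r) r) := hC1d.continuousOn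
  set R₀ : ℝ := Rfun Q u₀ with hR₀
  have hODE' : ∀ x ∈ Set.Ioo (-r) r, deriv (deriv u) x = deriv Q (u x) - R₀ := by
    intro x hx
    have h1 : -(r : EReal) < (x : EReal) := by
      rw [← EReal.coe_neg]; exact_mod_cast hx.1
    have h2 : (x : EReal) < (r : EReal) := by exact_mod_cast hx.2
    have := hODE x h1 h2
    linarith
  have hQu0 : Q u₀ = R₀ * u₀ := by
    rw [hR₀]; simp only [Rfun]; rw [div_mul_cancel₀ _ hu0pos.ne']
  -- energy identity
  have energy : ∀ x ∈ Set.Ioo (-r) r, (deriv u x) ^ 2 = 2 * (Q (u x) - R₀ * u x) := by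
    set F : ℝ → ℝ := fun x => (deriv u x) ^ 2 / 2 - Q (u x) + R₀ * u x with hF
    have hF' : ∀ x ∈ Set.Ioo (-r) r, HasDerivAt F 0 x := by
      intro x hx
      have h1 := hder x hx
      have h2 := hder2 x hx
      have hQd : HasDerivAt Q (deriv Q (u x)) (u x) := (hQdiff _ (hupos x hx)).hasDerivAt
      have h3 : HasDerivAt (fun y => Q (u y)) (deriv Q (u x) * deriv u x) x := hQd.comp x h1
      have h5 : HasDerivAt F ((2 : ℕ) * deriv u x ^ ((2:ℕ) - 1) * deriv (deriv u) x / 2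
          - deriv Q (u x) * deriv u x + R₀ * deriv u x) x :=
        (((h2.pow 2).div_const 2).sub h3).add (h1.const_mul R₀)
      have heq : ((2 : ℕ) * deriv u x ^ ((2:ℕ) - 1) * deriv (deriv u) x / 2
          - deriv Q (u x) * deriv u x + R₀ * deriv u x) = 0 := by
        rw [hODE' x hx]; push_cast; ring
      rwa [heq] at h5
    have hF0 : F 0 = 0 := by
      simp only [hF, hu'0, hu0, hQu0]; ring
    have hFconst : ∀ x ∈ Set.Ioo (-r) r, F x = 0 := by
      intro x hx
      have h0mem : (0:ℝ) ∈ Set.Ioo (-r) r := by constructor <;> linarith [hr]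
      rcases le_total 0 x with h0x | hx0
      · have hsub : Set.Icc (0:ℝ) x ⊆ Set.Ioo (-r) r := by
          intro y hy; exact ⟨by linarith [hy.1, hr], lt_of_le_of_lt hy.2 hx.2⟩
        have := constant_of_has_deriv_right_zero
          (f := F) (a := 0) (b := x)
          (fun y hy => (hF' y (hsub hy)).continuousAt.continuousWithinAt)
          (fun y hy => (hF' y (hsub (Set.Ico_subset_Icc_self hy))).hasDerivWithinAt)
          x (Set.right_mem_Icc.mpr h0x)
        rw [this, hF0]
      · have hsub : Set.Icc x (0:ℝ) ⊆ Set.Ioo (-r) r := by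
          intro y hy; exact ⟨lt_of_lt_of_le hx.1 hy.1, by linarith [hy.2, hr]⟩
        have := constant_of_has_deriv_right_zero
          (f := F) (a := x) (b := 0)
          (fun y hy => (hF' y (hsub hy)).continuousAt.continuousWithinAt)
          (fun y hy => (hF' y (hsub (Set.Ico_subset_Icc_self hy))).hasDerivWithinAt)
          0 (Set.right_mem_Icc.mpr hx0)
        rw [← hF0, this]
    intro x hx
    have := hFconst x hx
    simp only [hF] at this
    linarith
  -- limits as x → r⁻
  have hmemIoo : ∀ᶠ x in nhdsWithin r (Set.Iio r), x ∈ Set.Ioo 0 r :=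
    Ioo_mem_nhdsLT_of_mem (Set.right_mem_Ioc.mpr hr)
  have hsub0r : Set.Ioo (0:ℝ) r ⊆ Set.Ioo (-r) r := fun y hy => ⟨by linarith [hy.1, hr], hy.2⟩
  have hul0 : Tendsto u (nhdsWithin r (Set.Iio r)) (nhds 0) := by
    have := (hucont.tendsto r).mono_left (nhdsWithin_le_nhds (s := Set.Iio r))
    rwa [hur] at this
  have hulpos : Tendsto u (nhdsWithin r (Set.Iio r)) (nhdsWithin 0 (Set.Ioi 0)) := by
    rw [tendsto_nhdsWithin_iff]
    exact ⟨hul0, hmemIoo.mono fun x hx => hupos x (hsub0r hx)⟩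
  have hQlim : Tendsto (fun x => Q (u x) / (A * u x ^ (1 - m)))
      (nhdsWithin r (Set.Iio r)) (nhds 1) := hQasymp.comp hulpos
  have hpowlim : Tendsto (fun x => u x ^ m) (nhdsWithin r (Set.Iio r)) (nhds 0) := by
    have hc : ContinuousAt (fun s : ℝ => s ^ m) 0 :=
      Real.continuousAt_rpow_const 0 m (Or.inr (by linarith))
    have := hc.tendsto.comp hul0
    rwa [Real.zero_rpow (by positivity : m ≠ 0)] at this
  have hRlim : Tendsto (fun x => (R₀ * u x) / (A * u x ^ (1 - m)))
      (nhdsWithin r (Set.Iio r)) (nhds 0) := by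
    have h1 : Tendsto (fun x => (R₀ / A) * u x ^ m) (nhdsWithin r (Set.Iio r)) (nhds 0) := by
      have := hpowlim.const_mul (R₀ / A)
      rwa [mul_zero] at this
    refine h1.congr' (hmemIoo.mono fun x hx => ?_)
    have hu := hupos x (hsub0r hx)
    rw [eq_comm, div_eq_iff (by positivity)]
    rw [show m = 1 - (1 - m) by ring, Real.rpow_sub hu, Real.rpow_one]
    field_simp
    ring_nf
  have hElim : Tendsto (fun x => (Q (u x) - R₀ * u x) / (A * u x ^ (1 - m)))
      (nhdsWithin r (Set.Iio r)) (nhds 1) := by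
    have := hQlim.sub hRlim
    rw [sub_zero] at this
    refine this.congr fun x => ?_
    rw [sub_div]
  set ratio1 : ℝ → ℝ := fun x => deriv u x / (-(Real.sqrt (2 * A)) * u x ^ ((1 - m) / 2))
    with hratio1def
  have hratio1 : Tendsto ratio1 (nhdsWithin r (Set.Iio r)) (nhds 1) := by
    have hs : Tendsto (fun x => Real.sqrt ((Q (u x) - R₀ * u x) / (A * u x ^ (1 - m))))
        (nhdsWithin r (Set.Iio r)) (nhds 1) := by
      have := (Real.continuous_sqrt.continuousAt (x := (1:ℝ))).tendsto.comp hElim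
      rwa [Real.sqrt_one] at this
    refine hs.congr' (hmemIoo.mono fun x hx => ?_)
    have hu := hupos x (hsub0r hx)
    have hd := hdec x hx
    have hnum : (0:ℝ) ≤ Q (u x) - R₀ * u x := by
      have := energy x (hsub0r hx)
      nlinarith [sq_nonneg (deriv u x)]
    have hden : (0:ℝ) < A * u x ^ (1 - m) := by positivity
    rw [Real.sqrt_div hnum]
    have h1 : Real.sqrt (Q (u x) - R₀ * u x) = -deriv u x / Real.sqrt 2 := by
      rw [eq_div_iff (by positivity : Real.sqrt 2 ≠ 0)]
      have h2 : Real.sqrt (Q (u x) - R₀ * u x) * Real.sqrt 2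
          = Real.sqrt (2 * (Q (u x) - R₀ * u x)) := by
        rw [← Real.sqrt_mul hnum, mul_comm]
      rw [h2, ← energy x (hsub0r hx), Real.sqrt_sq_eq_abs, abs_of_neg hd]
    have h3' : Real.sqrt (u x ^ (1 - m)) = u x ^ ((1 - m) / 2) := by
      rw [Real.sqrt_eq_rpow, ← Real.rpow_mul hu.le]
      congr 1; ring
    have h3 : Real.sqrt (A * u x ^ (1 - m))
        = Real.sqrt A * u x ^ ((1 - m) / 2) := by
      rw [Real.sqrt_mul hA.le, h3']
    rw [h1, h3, hratio1def]
    have hs2 : Real.sqrt (2 * A) = Real.sqrt 2 * Real.sqrt A := Real.sqrt_mul (by norm_num) A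
    have hup : (0:ℝ) < u x ^ ((1 - m) / 2) := Real.rpow_pos_of_pos hu _
    have hsA : (0:ℝ) < Real.sqrt A := Real.sqrt_pos.mpr hA
    have hs2' : (0:ℝ) < Real.sqrt 2 := by positivity
    rw [hs2]
    field_simp
  -- `v = u^{(m+1)/2}` and its derivative limit
  set L : ℝ := (m + 1) / 2 * Real.sqrt (2 * A) with hLdef
  have hL : 0 < L := by
    have : (0:ℝ) < Real.sqrt (2 * A) := Real.sqrt_pos.mpr (by linarith)
    positivity
  set v : ℝ → ℝ := fun x => u x ^ ((m + 1) / 2) with hvdef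
  set v' : ℝ → ℝ := fun x => deriv u x * ((m + 1) / 2) * u x ^ ((m + 1) / 2 - 1) with hv'def
  have hv' : ∀ x ∈ Set.Ioo (0:ℝ) r, HasDerivAt v (v' x) x := by
    intro x hx
    exact (hder x (hsub0r hx)).rpow_const (Or.inl (ne_of_gt (hupos x (hsub0r hx))))
  have hvd : Tendsto v' (nhdsWithin r (Set.Iio r)) (nhds (-L)) := by
    have h1 : Tendsto (fun x => -L * ratio1 x) (nhdsWithin r (Set.Iio r)) (nhds (-L)) := by
      have := hratio1.const_mul (-L)
      rwa [mul_one] at this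
    refine h1.congr' (hmemIoo.mono fun x hx => ?_)
    have hu := hupos x (hsub0r hx)
    have hup1 : (0:ℝ) < u x ^ ((1 - m) / 2) := Real.rpow_pos_of_pos hu _
    have hup2 : (0:ℝ) < u x ^ ((m + 1) / 2 - 1) := Real.rpow_pos_of_pos hu _
    have hsA : (0:ℝ) < Real.sqrt (2 * A) := Real.sqrt_pos.mpr (by linarith)
    have hcancel : u x ^ ((m + 1) / 2 - 1) * u x ^ ((1 - m) / 2) = 1 := by
      rw [← Real.rpow_add hu, show (m + 1) / 2 - 1 + (1 - m) / 2 = (0:ℝ) by ring,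
        Real.rpow_zero]
    have hE : u x ^ ((m + 1) / 2 - 1) = (u x ^ ((1 - m) / 2))⁻¹ :=
      eq_inv_of_mul_eq_one_left hcancel
    rw [hv'def, hratio1def, hLdef]
    simp only
    rw [hE]
    field_simp
  have hvlim : Tendsto v (nhdsWithin r (Set.Iio r)) (nhds 0) := by
    have hc : ContinuousAt (fun s : ℝ => s ^ ((m + 1) / 2)) 0 :=
      Real.continuousAt_rpow_const 0 _ (Or.inr (by positivity))
    have := hc.tendsto.comp hul0
    rwa [Real.zero_rpow (by positivity : (m + 1) / 2 ≠ 0)] at this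
  have hlhop : Tendsto (fun x => v x / (r - x)) (nhdsWithin r (Set.Iio r)) (nhds L) := by
    refine HasDerivAt.lhopital_zero_left_on_Ioo (a := r / 2) (b := r)
      (f' := v') (g' := fun _ => -1) (by linarith) ?_ ?_ ?_ hvlim ?_ ?_
    · intro x hx
      exact hv' x ⟨by linarith [hx.1], hx.2⟩
    · intro x hx
      simpa using (hasDerivAt_id x).const_sub r
    · intro x hx; norm_num
    · have : Tendsto (fun x : ℝ => r - x) (nhds r) (nhds (r - r)) :=
        (continuous_const.sub continuous_id).tendsto r
      rw [sub_self] at this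
      exact this.mono_left nhdsWithin_le_nhds
    · have := hvd.neg
      rw [neg_neg] at this
      refine this.congr fun x => ?_
      rw [div_neg, div_one]
  -- first asymptotic
  set B : ℝ := A * (m + 1) ^ 2 / 2 with hBdef
  have hB : 0 < B := by positivity
  set c : ℝ := B ^ ((1:ℝ) / (m + 1)) with hcdef
  have hc : 0 < c := Real.rpow_pos_of_pos hB _
  have hLB : L = Real.sqrt B := by
    have h1 : L = Real.sqrt (((m + 1) / 2) ^ 2) * Real.sqrt (2 * A) := by
      rw [Real.sqrt_sq (by positivity)]
    rw [h1, ← Real.sqrt_mul (by positivity)]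
    congr 1
    rw [hBdef]; ring
  have hLrpow : L = B ^ ((1:ℝ) / 2) := by rw [hLB, Real.sqrt_eq_rpow]
  have hLq : L ^ ((2:ℝ) / (m + 1)) = c := by
    rw [hLrpow, ← Real.rpow_mul hB.le, hcdef]
    congr 1
    field_simp
  have main1 : Tendsto
      (fun x => u x / ((A * (m + 1) ^ 2 / 2) ^ ((1:ℝ) / (m + 1)) * (r - x) ^ ((2:ℝ) / (m + 1))))
      (nhdsWithin r (Set.Iio r)) (nhds 1) := by
    have hinner : Tendsto (fun x => v x / (L * (r - x))) (nhdsWithin r (Set.Iio r)) (nhds 1) := by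
      have := hlhop.div_const L
      rw [div_self hL.ne'] at this
      refine this.congr fun x => ?_
      rw [div_div, mul_comm]
    have hcomp : Tendsto (fun x => (v x / (L * (r - x))) ^ ((2:ℝ) / (m + 1)))
        (nhdsWithin r (Set.Iio r)) (nhds 1) := by
      have hcont : ContinuousAt (fun s : ℝ => s ^ ((2:ℝ) / (m + 1))) 1 :=
        Real.continuousAt_rpow_const 1 _ (Or.inl one_ne_zero)
      have := hcont.tendsto.comp hinner
      rwa [Real.one_rpow] at this
    refine hcomp.congr' (hmemIoo.mono fun x hx => ?_)
    have hu := hupos x (hsub0r hx)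
    have hrx : (0:ℝ) < r - x := by linarith [hx.2]
    have hvx : (0:ℝ) ≤ v x := Real.rpow_nonneg hu.le _
    rw [Real.div_rpow hvx (by positivity)]
    have hnum : v x ^ ((2:ℝ) / (m + 1)) = u x := by
      rw [hvdef]
      simp only
      rw [← Real.rpow_mul hu.le]
      rw [show (m + 1) / 2 * ((2:ℝ) / (m + 1)) = 1 by field_simp]
      exact Real.rpow_one _
    have hden : (L * (r - x)) ^ ((2:ℝ) / (m + 1)) = c * (r - x) ^ ((2:ℝ) / (m + 1)) := by
      rw [Real.mul_rpow hL.le hrx.le, hLq]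
    rw [hnum, hden]
  have hcL : c ^ ((1 - m) / 2) = c / L := by
    rw [hcdef, ← Real.rpow_mul hB.le, hLrpow, ← Real.rpow_sub hB]
    congr 1
    field_simp
    ring
  have hsA2 : (0:ℝ) < Real.sqrt (2 * A) := Real.sqrt_pos.mpr (by linarith)
  have hkey : Real.sqrt (2 * A) * c ^ ((1 - m) / 2) = 2 / (m + 1) * c := by
    rw [hcL, hLdef]
    field_simp
  have main2 : Tendsto
      (fun x => deriv u x /
        (-(2 / (m + 1)) * (A * (m + 1) ^ 2 / 2) ^ ((1:ℝ) / (m + 1)) * (r - x) ^ ((1 - m) / (m + 1))))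
      (nhdsWithin r (Set.Iio r)) (nhds 1) := by
    have hT1p : Tendsto
        (fun x => (u x / ((A * (m + 1) ^ 2 / 2) ^ ((1:ℝ) / (m + 1))
          * (r - x) ^ ((2:ℝ) / (m + 1)))) ^ ((1 - m) / 2))
        (nhdsWithin r (Set.Iio r)) (nhds 1) := by
      have hcont : ContinuousAt (fun s : ℝ => s ^ ((1 - m) / 2)) 1 :=
        Real.continuousAt_rpow_const 1 _ (Or.inl one_ne_zero)
      have := hcont.tendsto.comp main1
      rwa [Real.one_rpow] at this
    have hprod := hratio1.mul hT1p
    rw [mul_one] at hprod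
    refine hprod.congr' (hmemIoo.mono fun x hx => ?_)
    have hu := hupos x (hsub0r hx)
    have hrx : (0:ℝ) < r - x := by linarith [hx.2]
    have hrq : (0:ℝ) < (r - x) ^ ((2:ℝ) / (m + 1)) := Real.rpow_pos_of_pos hrx _
    have hrp2 : (0:ℝ) < (r - x) ^ ((1 - m) / (m + 1)) := Real.rpow_pos_of_pos hrx _
    have hup : (0:ℝ) < u x ^ ((1 - m) / 2) := Real.rpow_pos_of_pos hu _
    have hcp : (0:ℝ) < c ^ ((1 - m) / 2) := Real.rpow_pos_of_pos hc _
    simp only [hratio1def]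
    rw [Real.div_rpow hu.le (by positivity),
      Real.mul_rpow hc.le hrq.le, ← Real.rpow_mul hrx.le,
      show (2:ℝ) / (m + 1) * ((1 - m) / 2) = (1 - m) / (m + 1) by field_simp]
    rw [show -(2 / (m + 1)) * c = -(Real.sqrt (2 * A) * c ^ ((1 - m) / 2)) by
      rw [hkey]; ring]
    field_simp
  -- integrability of `u'²`
  obtain ⟨e2, he2def⟩ : ∃ e2 : ℝ, e2 = 2 * ((1 - m) / (m + 1)) := ⟨_, rfl⟩
  have he2 : (-1:ℝ) < e2 := by
    rw [he2def, show 2 * ((1 - m) / (m + 1)) = (2 - 2 * m) / (m + 1) by ring,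
      lt_div_iff₀ hm1]
    linarith
  obtain ⟨K, hKdef⟩ : ∃ K : ℝ, K = 4 * (2 / (m + 1) * c) ^ 2 := ⟨_, rfl⟩
  have hbound : ∀ᶠ x in nhdsWithin r (Set.Iio r),
      (deriv u x) ^ 2 ≤ K * (r - x) ^ e2 := by
    have h1 : ∀ᶠ x in nhdsWithin r (Set.Iio r),
        dist (deriv u x /
          (-(2 / (m + 1)) * (A * (m + 1) ^ 2 / 2) ^ ((1:ℝ) / (m + 1))
            * (r - x) ^ ((1 - m) / (m + 1)))) 1 < 1 :=
      Metric.tendsto_nhds.mp main2 1 one_pos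
    filter_upwards [h1, hmemIoo] with x hx1 hx2
    have hrx : (0:ℝ) < r - x := by linarith [hx2.2]
    have hrp2 : (0:ℝ) < (r - x) ^ ((1 - m) / (m + 1)) := Real.rpow_pos_of_pos hrx _
    obtain ⟨D, hD⟩ : ∃ D : ℝ,
      D = -(2 / (m + 1)) * c * (r - x) ^ ((1 - m) / (m + 1)) := ⟨_, rfl⟩
    rw [← hD] at hx1
    have hDneg : D < 0 := by
      have h5 : (0:ℝ) < 2 / (m + 1) * c * (r - x) ^ ((1 - m) / (m + 1)) := by positivity
      rw [hD]; linarith [h5]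
    rw [Real.dist_eq] at hx1
    have hT := abs_lt.mp hx1
    have hP2 : ((r - x) ^ ((1 - m) / (m + 1))) ^ (2:ℕ) = (r - x) ^ e2 := by
      rw [← Real.rpow_natCast ((r - x) ^ ((1 - m) / (m + 1))) 2, ← Real.rpow_mul hrx.le,
        he2def]
      norm_num
      rw [mul_comm]
    have hdu : (deriv u x / D) * D = deriv u x := div_mul_cancel₀ _ hDneg.ne
    have hsq : (deriv u x / D) ^ 2 * D ^ 2 = (deriv u x) ^ 2 := by
      rw [← mul_pow, hdu]
    have hD2 : D ^ 2 = (2 / (m + 1) * c) ^ 2 * (r - x) ^ e2 := by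
      rw [hD, ← hP2]; ring
    have hKD : K * (r - x) ^ e2 = 4 * D ^ 2 := by rw [hD2, hKdef]; ring
    have hT2 : (deriv u x / D) ^ 2 ≤ 4 := by nlinarith [hT.1, hT.2]
    calc (deriv u x) ^ 2 = (deriv u x / D) ^ 2 * D ^ 2 := hsq.symm
      _ ≤ 4 * D ^ 2 := mul_le_mul_of_nonneg_right hT2 (sq_nonneg D)
      _ = K * (r - x) ^ e2 := hKD.symm
  obtain ⟨a, har, hsubset⟩ := mem_nhdsLT_iff_exists_Ioo_subset.mp hbound
  obtain ⟨a', ha'def⟩ : ∃ a' : ℝ, a' = max a 0 := ⟨_, rfl⟩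
  have ha' : a' < r := by rw [ha'def]; exact max_lt har hr
  have ha'0 : (0:ℝ) ≤ a' := ha'def ▸ le_max_right a 0
  have hbb : ∀ x ∈ Set.Ioo a' r, (deriv u x) ^ 2 ≤ K * (r - x) ^ e2 := fun x hx =>
    hsubset ⟨lt_of_le_of_lt (ha'def ▸ le_max_left a 0) hx.1, hx.2⟩
  have hg : IntegrableOn (fun x => K * (r - x) ^ e2) (Set.Ioc a' r) := by
    have h0 : IntervalIntegrable (fun t : ℝ => t ^ e2) volume 0 (r - a') :=
      intervalIntegral.intervalIntegrable_rpow' he2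
    have h1 := (h0.comp_sub_left r).symm
    rw [show r - 0 = r by ring, show r - (r - a') = a' by ring] at h1
    have h2 : IntegrableOn (fun x => (r - x) ^ e2) (Set.Ioc a' r) := h1.1
    exact h2.const_mul K
  have hf1 : IntegrableOn (fun x => (deriv u x) ^ 2) (Set.Ioo a' r) := by
    refine Integrable.mono' (hg.mono_set Set.Ioo_subset_Ioc_self) ?_ ?_
    · exact ((measurable_deriv u).pow_const 2).aestronglyMeasurable
    · rw [ae_restrict_iff' measurableSet_Ioo]
      filter_upwards with x hx
      rw [Real.norm_eq_abs, abs_of_nonneg (sq_nonneg _)]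
      exact hbb x hx
  have hmid : IntegrableOn (fun x => (deriv u x) ^ 2) (Set.Icc (-a') a') := by
    have hsub : Set.Icc (-a') a' ⊆ Set.Ioo (-r) r := fun y hy =>
      ⟨by linarith [hy.1], by linarith [hy.2]⟩
    exact ((hdcont.mono hsub).pow 2).integrableOn_compact isCompact_Icc
  have hodd : ∀ x ∈ Set.Ioo (-r) r, deriv u (-x) = -deriv u x := by
    intro x hx
    have hx' : -x ∈ Set.Ioo (-r) r := ⟨by linarith [hx.2], by linarith [hx.1]⟩
    have h1 : HasDerivAt (u ∘ fun y : ℝ => -y) (deriv u (-x) * -1) x :=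
      (hder _ hx').comp x (hasDerivAt_neg x)
    have h2 : HasDerivAt u (deriv u (-x) * -1) x := by
      have heq : (u ∘ fun y : ℝ => -y) = u := funext fun y => heven y
      rwa [heq] at h1
    have := h2.unique (hder x hx)
    linarith
  have hleft : IntegrableOn (fun x => (deriv u x) ^ 2) (Set.Ioo (-r) (-a')) := by
    have hg2 : IntegrableOn (fun x => K * (x - -r) ^ e2) (Set.Ioc (-r) (-a')) := by
      have h0 : IntervalIntegrable (fun t : ℝ => t ^ e2) volume 0 (r - a') :=
        intervalIntegral.intervalIntegrable_rpow' he2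
      have h1 := h0.comp_sub_right (-r)
      rw [show (0:ℝ) + -r = -r by ring, show r - a' + -r = -a' by ring] at h1
      exact h1.1.const_mul K
    refine Integrable.mono' (hg2.mono_set Set.Ioo_subset_Ioc_self) ?_ ?_
    · exact ((measurable_deriv u).pow_const 2).aestronglyMeasurable
    · rw [ae_restrict_iff' measurableSet_Ioo]
      filter_upwards with x hx
      rw [Real.norm_eq_abs, abs_of_nonneg (sq_nonneg _)]
      have hxm : x ∈ Set.Ioo (-r) r := ⟨hx.1, by linarith [hx.2]⟩
      have hxx : -x ∈ Set.Ioo a' r := ⟨by linarith [hx.2], by linarith [hx.1]⟩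
      have h3 : (deriv u x) ^ 2 = (deriv u (-x)) ^ 2 := by
        have hx'' : -x ∈ Set.Ioo (-r) r := ⟨by linarith [hxm.2], by linarith [hxm.1]⟩
        have := hodd (-x) hx''
        rw [neg_neg] at this
        rw [this]; ring
      have := hbb (-x) hxx
      rw [h3]
      calc (deriv u (-x)) ^ 2 ≤ K * (r - -x) ^ e2 := this
        _ = K * (x - -r) ^ e2 := by ring_nf
  have hcover : Set.Ioo (-r) r ⊆
      Set.Ioo (-r) (-a') ∪ (Set.Icc (-a') a' ∪ Set.Ioo a' r) := by
    intro x hx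
    rcases lt_or_ge x (-a') with h | h
    · exact Or.inl ⟨hx.1, h⟩
    · rcases le_or_gt x a' with h2 | h2
      · exact Or.inr (Or.inl ⟨h, h2⟩)
      · exact Or.inr (Or.inr ⟨h2, hx.2⟩)
  exact ⟨main1, main2, (hleft.union (hmid.union hf1)).mono_set hcover⟩
end
end

section
/- Assume N = 1 and Q satisfies (H-EL) and (H-R). Then sup 𝒜 = e_*, and in particular 𝒜 ⊆ (0, e_*). Moreover, if e_* = +∞ and z₀ := sup{z > 0 : for every z' ∈ (0,z) the set {s > 0 : R(s) = z'} has at most one element} is finite, then, with e_min := min{s > 0 : R(s) = z₀} and e_max := max{s > 0 : R(s) = z₀}, one has 𝒜 ⊆ (0, e_min) ∪ (e_max, +∞). -/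
open MeasureTheory Filter Set

noncomputable section

namespace Stmt9Aux

variable {Q : ℝ → ℝ} {A m : ℝ}

lemma Rcont (hc : ContinuousOn Q (Set.Ioi 0)) : ContinuousOn (Rfun Q) (Set.Ioi 0) :=
  hc.div continuousOn_id fun _ hs => ne_of_gt hs

lemma RcontAt (hc : ContinuousOn Q (Set.Ioi 0)) {s : ℝ} (hs : 0 < s) :
    ContinuousAt (Rfun Q) s := (Rcont hc).continuousAt (Ioi_mem_nhds hs)

lemma RhasDeriv (hd : ∀ s : ℝ, 0 < s → DifferentiableAt ℝ Q s) {s : ℝ} (hs : 0 < s) :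
    HasDerivAt (Rfun Q) ((deriv Q s * s - Q s) / s ^ 2) s := by
  have h := (hd s hs).hasDerivAt.div (hasDerivAt_id s) (ne_of_gt hs)
  simp only [id_eq, mul_one] at h
  exact h

lemma RdiffAt (hd : ∀ s : ℝ, 0 < s → DifferentiableAt ℝ Q s) {s : ℝ} (hs : 0 < s) :
    DifferentiableAt ℝ (Rfun Q) s := (RhasDeriv hd hs).differentiableAt

lemma derivR (hd : ∀ s : ℝ, 0 < s → DifferentiableAt ℝ Q s) {s : ℝ} (hs : 0 < s) :
    deriv (Rfun Q) s = (deriv Q s * s - Q s) / s ^ 2 := (RhasDeriv hd hs).deriv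

lemma RderivCont (hd : ∀ s : ℝ, 0 < s → DifferentiableAt ℝ Q s)
    (hc : ContinuousOn Q (Set.Ioi 0)) (hc' : ContinuousOn (deriv Q) (Set.Ioi 0)) :
    ContinuousOn (deriv (Rfun Q)) (Set.Ioi 0) := by
  have h1 : ContinuousOn (fun s : ℝ => (deriv Q s * s - Q s) / s ^ 2) (Set.Ioi 0) := by
    refine ContinuousOn.div ?_ ?_ ?_
    · exact (hc'.mul continuousOn_id).sub hc
    · exact (continuous_pow 2).continuousOn
    · exact fun s hs => pow_ne_zero 2 (ne_of_gt hs)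
  exact h1.congr fun s hs => derivR hd hs

lemma RderivContAt (hd : ∀ s : ℝ, 0 < s → DifferentiableAt ℝ Q s)
    (hc : ContinuousOn Q (Set.Ioi 0)) (hc' : ContinuousOn (deriv Q) (Set.Ioi 0))
    {s : ℝ} (hs : 0 < s) : ContinuousAt (deriv (Rfun Q)) s :=
  (RderivCont hd hc hc').continuousAt (Ioi_mem_nhds hs)

lemma Rtop (hH : HypH Q A m) : Tendsto (Rfun Q) (nhdsWithin 0 (Set.Ioi 0)) atTop := by
  obtain ⟨hc, h0, hb, hA, hm, hlim⟩ := hH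
  have hm0 : m ≠ 0 := by linarith
  have h1 : Tendsto (fun s : ℝ => s ^ m) (nhdsWithin 0 (Set.Ioi 0)) (nhdsWithin 0 (Set.Ioi 0)) := by
    rw [tendsto_nhdsWithin_iff]
    constructor
    · have h := (Real.continuousAt_rpow_const 0 m (Or.inr (by linarith))).tendsto
      rw [Real.zero_rpow hm0] at h
      exact h.mono_left nhdsWithin_le_nhds
    · filter_upwards [self_mem_nhdsWithin] with s hs
      exact Real.rpow_pos_of_pos hs m
  have h2 : Tendsto (fun s : ℝ => (s ^ m)⁻¹) (nhdsWithin 0 (Set.Ioi 0)) atTop :=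
    tendsto_inv_nhdsGT_zero.comp h1
  have h3 : Tendsto (fun s : ℝ => A * (s ^ m)⁻¹) (nhdsWithin 0 (Set.Ioi 0)) atTop :=
    h2.const_mul_atTop hA
  have key : Tendsto (fun s : ℝ => (Q s / (A * s ^ (1 - m))) * (A * (s ^ m)⁻¹))
      (nhdsWithin 0 (Set.Ioi 0)) atTop := hlim.pos_mul_atTop one_pos h3
  refine key.congr' ?_
  filter_upwards [self_mem_nhdsWithin] with s hs
  have hs0 : (0:ℝ) < s := hs
  have hsm : s ^ (1 - m) = s * (s ^ m)⁻¹ := by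
    rw [show (1 - m) = 1 + (-m) by ring, Real.rpow_add hs0, Real.rpow_one,
      Real.rpow_neg hs0.le]
  have hsm0 : s ^ m ≠ 0 := ne_of_gt (Real.rpow_pos_of_pos hs0 m)
  rw [hsm]
  show Q s / (A * (s * (s ^ m)⁻¹)) * (A * (s ^ m)⁻¹) = Rfun Q s
  rw [Rfun]
  field_simp

lemma exists_min (hc : ContinuousOn Q (Set.Ioi 0))
    (htop : Tendsto (Rfun Q) (nhdsWithin 0 (Set.Ioi 0)) atTop)
    {b : ℝ} (hb : 0 < b) :
    ∃ p ∈ Set.Ioc (0:ℝ) b, ∀ t ∈ Set.Ioc (0:ℝ) b, Rfun Q p ≤ Rfun Q t := by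
  have h1 : {s : ℝ | Rfun Q b < Rfun Q s} ∈ nhdsWithin 0 (Set.Ioi 0) :=
    htop.eventually (eventually_gt_atTop (Rfun Q b))
  rw [mem_nhdsGT_iff_exists_Ioo_subset] at h1
  obtain ⟨u, hu, hsub⟩ := h1
  have hu0 : (0:ℝ) < u := hu
  set ε := min (u/2) b with hε
  have hε0 : 0 < ε := lt_min (by linarith) hb
  have hεb : ε ≤ b := min_le_right _ _
  obtain ⟨p, hp, hmin⟩ := isCompact_Icc.exists_isMinOn (f := Rfun Q)
    ⟨ε, le_refl ε, hεb⟩ ((Rcont hc).mono (fun t ht => lt_of_lt_of_le hε0 ht.1))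
  refine ⟨p, ⟨lt_of_lt_of_le hε0 hp.1, hp.2⟩, ?_⟩
  intro t ht
  rcases le_or_gt ε t with h | h
  · exact hmin ⟨h, ht.2⟩
  · have h2 : Rfun Q b < Rfun Q t := by
      refine hsub ⟨ht.1, ?_⟩
      have : ε ≤ u/2 := min_le_left _ _
      linarith
    exact le_trans (hmin ⟨hεb, le_refl b⟩) h2.le

lemma deriv_nonpos_left {f : ℝ → ℝ} {s : ℝ} (hs : 0 < s) (hf : DifferentiableAt ℝ f s)
    (h : ∀ t, 0 < t → t < s → f s ≤ f t) : deriv f s ≤ 0 := by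
  have hslope := hasDerivAt_iff_tendsto_slope.1 hf.hasDerivAt
  have h2 : Tendsto (slope f s) (nhdsWithin s (Set.Iio s)) (nhds (deriv f s)) :=
    hslope.mono_left (nhdsWithin_mono _ (fun t ht => ne_of_lt ht))
  refine le_of_tendsto h2 ?_
  filter_upwards [self_mem_nhdsWithin,
    mem_nhdsWithin_of_mem_nhds (Ioi_mem_nhds hs)] with t ht1 ht2
  rw [slope_def_field]
  have ht1' : t < s := ht1
  have ht2' : (0:ℝ) < t := ht2
  exact div_nonpos_of_nonneg_of_nonpos (by linarith [h t ht2' ht1']) (by linarith)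

lemma exists_right_lt {f : ℝ → ℝ} {s u : ℝ} (hf : DifferentiableAt ℝ f s)
    (hd : deriv f s < 0) (hu : s < u) : ∃ t, s < t ∧ t < u ∧ f t < f s := by
  have hslope := hasDerivAt_iff_tendsto_slope.1 hf.hasDerivAt
  have h2 : Tendsto (slope f s) (nhdsWithin s (Set.Ioi s)) (nhds (deriv f s)) :=
    hslope.mono_left (nhdsWithin_mono _ (fun t ht => ne_of_gt ht))
  have h3 : ∀ᶠ t in nhdsWithin s (Set.Ioi s), slope f s t < 0 := h2.eventually_lt_const hd
  have h4 : Set.Ioo s u ∈ nhdsWithin s (Set.Ioi s) :=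
    Ioo_mem_nhdsGT_of_mem ⟨le_refl s, hu⟩
  obtain ⟨t, hts, htu⟩ := (h3.and (eventually_of_mem h4 (fun t ht => ht))).exists
  refine ⟨t, htu.1, htu.2, ?_⟩
  rw [slope_def_field] at hts
  rcases div_neg_iff.1 hts with ⟨_, h⟩ | ⟨h, _⟩
  · exfalso; have := htu.1; linarith [h]
  · linarith [h]

lemma deriv_sign_const {I : Set ℝ} (hI : I.OrdConnected) (hIsub : I ⊆ Set.Ioi 0)
    (hcont : ContinuousOn (deriv (Rfun Q)) (Set.Ioi 0))
    (hne : ∀ s ∈ I, deriv (Rfun Q) s ≠ 0) {x y : ℝ} (hx : x ∈ I) (hy : y ∈ I)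
    (hxneg : deriv (Rfun Q) x < 0) : deriv (Rfun Q) y < 0 := by
  by_contra h
  have hy' : 0 < deriv (Rfun Q) y := lt_of_le_of_ne (not_lt.1 h) (Ne.symm (hne y hy))
  have hsub : Set.uIcc x y ⊆ I := hI.uIcc_subset hx hy
  have h0 : (0:ℝ) ∈ Set.uIcc (deriv (Rfun Q) x) (deriv (Rfun Q) y) := by
    rw [Set.mem_uIcc]; left; exact ⟨hxneg.le, hy'.le⟩
  obtain ⟨z, hz, hz0⟩ := intermediate_value_uIcc (hcont.mono (hsub.trans hIsub)) h0
  exact hne z (hsub hz) hz0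

lemma derivNeg0 (hd : ∀ s : ℝ, 0 < s → DifferentiableAt ℝ Q s)
    (hc : ContinuousOn Q (Set.Ioi 0))
    (hdc : ContinuousOn (deriv (Rfun Q)) (Set.Ioi 0))
    (htop : Tendsto (Rfun Q) (nhdsWithin 0 (Set.Ioi 0)) atTop) {δ : ℝ} (hδ : 0 < δ)
    (hne : ∀ s, 0 < s → s < δ → deriv (Rfun Q) s ≠ 0) :
    ∀ s ∈ Set.Ioo (0:ℝ) δ, deriv (Rfun Q) s < 0 := by
  by_contra h
  push_neg at h
  obtain ⟨s, hs, hsp⟩ := h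
  have hsp' : 0 < deriv (Rfun Q) s := lt_of_le_of_ne hsp (Ne.symm (hne s hs.1 hs.2))
  have hall : ∀ t ∈ Set.Ioo (0:ℝ) δ, 0 < deriv (Rfun Q) t := by
    intro t ht
    by_contra h2
    have h2' : deriv (Rfun Q) t < 0 := lt_of_le_of_ne (not_lt.1 h2) (hne t ht.1 ht.2)
    have := deriv_sign_const Set.ordConnected_Ioo (fun z hz => hz.1) hdc
      (fun z hz => hne z hz.1 hz.2) ht hs h2'
    linarith
  have hmono : StrictMonoOn (Rfun Q) (Set.Ioo 0 δ) := by
    refine strictMonoOn_of_deriv_pos (convex_Ioo _ _) ((Rcont hc).mono fun z hz => hz.1) ?_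
    rw [interior_Ioo]; exact hall
  have h5 : ∀ᶠ t in nhdsWithin 0 (Set.Ioi 0), Rfun Q s < Rfun Q t :=
    htop.eventually (eventually_gt_atTop _)
  have h6 : Set.Ioo (0:ℝ) s ∈ nhdsWithin 0 (Set.Ioi 0) :=
    Ioo_mem_nhdsGT_of_mem ⟨le_refl 0, hs.1⟩
  obtain ⟨t, h7, h8⟩ := (h5.and (eventually_of_mem h6 (fun z hz => hz))).exists
  have : Rfun Q t < Rfun Q s := hmono ⟨h8.1, h8.2.trans hs.2⟩ hs h8.2
  linarith

lemma sard (hd : ∀ s : ℝ, 0 < s → DifferentiableAt ℝ Q s) {a b : ℝ} (ha : 0 < a) :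
    volume (Rfun Q '' {x : ℝ | x ∈ Set.Icc a b ∧ deriv (Rfun Q) x = 0}) = 0 := by
  have hdet : ((0 : ℝ →L[ℝ] ℝ)).det = 0 := by
    rw [ContinuousLinearMap.det]
    rw [ContinuousLinearMap.coe_zero, LinearMap.det_zero]
    norm_num
  refine MeasureTheory.addHaar_image_eq_zero_of_det_fderivWithin_eq_zero
    (f' := fun _ => (0 : ℝ →L[ℝ] ℝ)) volume ?_ (fun x _ => hdet)
  intro x hx
  have hx0 : 0 < x := lt_of_lt_of_le ha hx.1.1
  have h1 : HasDerivAt (Rfun Q) 0 x := by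
    have h := (RdiffAt hd hx0).hasDerivAt
    rwa [hx.2] at h
  have h2 := hasDerivAt_iff_hasFDerivAt.1 h1
  have h3 : ContinuousLinearMap.toSpanSingleton ℝ (0:ℝ) = 0 := by
    ext x; simp
  rw [h3] at h2
  exact h2.hasFDerivWithinAt

lemma part1 (hQ : HypHEL Q A m) (hR : HypHR Q) {e : ℝ} (he : IsEStar Q e) :
    IsLUB (Aset Q) e ∧ Aset Q ⊆ Set.Ioo 0 e := by
  obtain ⟨⟨hH, hm3, hd, hdc⟩, -⟩ := hQ
  obtain ⟨hc, h0, hbdd, hA, hm, hlim⟩ := hH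
  obtain ⟨δ, hδ0, hδ1, hne⟩ := hR
  have htop : Tendsto (Rfun Q) (nhdsWithin 0 (Set.Ioi 0)) atTop :=
    Rtop ⟨hc, h0, hbdd, hA, hm, hlim⟩
  have hRc := Rcont hc
  have hRdC := RderivCont hd hc hdc
  obtain ⟨he0, hemin, heleast⟩ := he
  -- upper bound
  have hupper : ∀ s ∈ Aset Q, s < e := by
    rintro s ⟨hs0, hsd, hsmin⟩
    rcases lt_trichotomy s e with h | h | h
    · exact h
    · exfalso
      have hloc : IsLocalMin (Rfun Q) e :=
        Filter.eventually_of_mem (Ioi_mem_nhds he0) (fun t ht => hemin t ht)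
      have hz := hloc.deriv_eq_zero
      rw [h] at hsd; rw [hz] at hsd; exact lt_irrefl 0 hsd
    · exfalso
      have h1 := hsmin e he0 h
      have h2 := hemin s hs0
      linarith
  refine ⟨⟨fun s hs => (hupper s hs).le, ?_⟩, fun s hs => ⟨hs.1, hupper s hs⟩⟩
  intro b hb
  by_contra hbe'
  push_neg at hbe'
  have hbe : b < e := hbe'
  -- points near zero are in Aset
  have hneg := derivNeg0 hd hc hRdC htop hδ0 (fun s h1 h2 => hne s (Or.inl ⟨h1, h2⟩))
  have hanti : StrictAntiOn (Rfun Q) (Set.Ioo 0 δ) := by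
    refine strictAntiOn_of_deriv_neg (convex_Ioo _ _) (hRc.mono fun z hz => hz.1) ?_
    rw [interior_Ioo]; exact hneg
  have hA0 : ∀ s ∈ Set.Ioo (0:ℝ) δ, s ∈ Aset Q := by
    intro s hs
    exact ⟨hs.1, hneg s hs, fun t ht1 ht2 => hanti ⟨ht1, ht2.trans hs.2⟩ hs ht2⟩
  have hb0 : 0 < b :=
    lt_of_lt_of_le (half_pos hδ0) (hb (hA0 (δ/2) ⟨half_pos hδ0, half_lt_self hδ0⟩))
  obtain ⟨p, hp, hpmin⟩ := exists_min hc htop hb0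
  have hμe : Rfun Q e < Rfun Q p := by
    by_contra h
    push_neg at h
    have hglob : ∀ t, 0 < t → Rfun Q p ≤ Rfun Q t := by
      intro t ht
      rcases le_or_gt t b with h1 | h1
      · exact hpmin t ⟨ht, h1⟩
      · exact le_trans h (hemin t ht)
    have := heleast p hp.1 hglob
    linarith [hp.2]
  -- first hitting points
  have hkey : ∀ y ∈ Set.Ioo (Rfun Q e) (Rfun Q p), ∃ s, s ∈ Set.Ioo b e ∧ Rfun Q s = y ∧
      (∀ t, 0 < t → t < s → Rfun Q s < Rfun Q t) := by
    intro y hy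
    have h1 : {t : ℝ | y < Rfun Q t} ∈ nhdsWithin 0 (Set.Ioi 0) :=
      htop.eventually (eventually_gt_atTop y)
    rw [mem_nhdsGT_iff_exists_Ioo_subset] at h1
    obtain ⟨u, hu, husub⟩ := h1
    have hu0 : (0:ℝ) < u := hu
    set ε := min (u/2) e with hεdef
    have hε0 : 0 < ε := lt_min (by linarith) he0
    have hεe : ε ≤ e := min_le_right _ _
    set S := {t : ℝ | t ∈ Set.Icc ε e ∧ Rfun Q t ≤ y} with hSdef
    have hSne : S.Nonempty := ⟨e, ⟨hεe, le_refl e⟩, hy.1.le⟩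
    have hSbdd : BddBelow S := ⟨ε, fun t ht => ht.1.1⟩
    have hSclosed : IsClosed S := by
      have hIccsub : Set.Icc ε e ⊆ Set.Ioi 0 := fun t ht => lt_of_lt_of_le hε0 ht.1
      have : S = Set.Icc ε e ∩ Rfun Q ⁻¹' Set.Iic y := rfl
      rw [this]
      exact ContinuousOn.preimage_isClosed_of_isClosed (hRc.mono hIccsub)
        isClosed_Icc isClosed_Iic
    set s := sInf S with hsdef
    have hsS : s ∈ S := hSclosed.csInf_mem hSne hSbdd
    have hs0 : 0 < s := lt_of_lt_of_le hε0 hsS.1.1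
    have hlt : ∀ t, 0 < t → t < s → y < Rfun Q t := by
      intro t ht0 hts
      rcases lt_or_ge t ε with h | h
      · refine husub ⟨ht0, ?_⟩
        have : ε ≤ u/2 := min_le_left _ _
        linarith
      · by_contra h2
        push_neg at h2
        have htS : t ∈ S := ⟨⟨h, le_trans hts.le hsS.1.2⟩, h2⟩
        exact absurd (csInf_le hSbdd htS) (not_le.2 hts)
    have hsy : Rfun Q s = y := by
      refine le_antisymm hsS.2 ?_
      have hten : Tendsto (Rfun Q) (nhdsWithin s (Set.Iio s)) (nhds (Rfun Q s)) :=
        (RcontAt hc hs0).tendsto.mono_left nhdsWithin_le_nhds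
      refine ge_of_tendsto hten ?_
      filter_upwards [self_mem_nhdsWithin,
        mem_nhdsWithin_of_mem_nhds (Ioi_mem_nhds hs0)] with t ht1 ht2
      exact (hlt t ht2 ht1).le
    have hsb : b < s := by
      by_contra h
      push_neg at h
      have h2 := hpmin s ⟨hs0, h⟩
      rw [hsy] at h2
      linarith [hy.2]
    have hse : s < e := by
      rcases lt_or_eq_of_le hsS.1.2 with h | h
      · exact h
      · exfalso; rw [h] at hsy; rw [hsy] at hy; exact lt_irrefl y hy.1
    exact ⟨s, ⟨hsb, hse⟩, hsy, fun t ht0 hts => by rw [hsy]; exact hlt t ht0 hts⟩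
  have hexists : ∃ s, s ∈ Aset Q ∧ b < s := by
    by_contra hno
    push_neg at hno
    have himg : Set.Ioo (Rfun Q e) (Rfun Q p) ⊆
        Rfun Q '' {x : ℝ | x ∈ Set.Icc b e ∧ deriv (Rfun Q) x = 0} := by
      intro y hy
      obtain ⟨s, hsbe, hsy, hsmin⟩ := hkey y hy
      have hs0 : 0 < s := hb0.trans hsbe.1
      have hd0 : deriv (Rfun Q) s ≤ 0 :=
        deriv_nonpos_left hs0 (RdiffAt hd hs0) (fun t ht hts => (hsmin t ht hts).le)
      have hdz : deriv (Rfun Q) s = 0 := by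
        rcases eq_or_lt_of_le hd0 with h | h
        · exact h
        · exfalso
          have hmem : s ∈ Aset Q := ⟨hs0, h, hsmin⟩
          exact absurd (hno s hmem) (not_le.2 hsbe.1)
      exact ⟨s, ⟨⟨hsbe.1.le, hsbe.2.le⟩, hdz⟩, hsy⟩
    have h1 := sard (Q := Q) hd (b := e) hb0
    have h2 : volume (Set.Ioo (Rfun Q e) (Rfun Q p)) = 0 :=
      le_antisymm (h1 ▸ measure_mono himg) (zero_le)
    rw [Real.volume_Ioo] at h2
    have h3 : (0:ENNReal) < ENNReal.ofReal (Rfun Q p - Rfun Q e) :=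
      ENNReal.ofReal_pos.2 (sub_pos.2 hμe)
    rw [h2] at h3
    exact lt_irrefl 0 h3
  obtain ⟨s, hsA, hbs⟩ := hexists
  exact absurd (hb hsA) (not_le.2 hbs)

lemma tailFacts (hQ : HypHEL Q A m) (hR : HypHR Q) (hEI : EStarInfinite Q) :
    ∃ X L : ℝ, 0 < X ∧ 0 ≤ L ∧ (∀ s, X < s → deriv (Rfun Q) s < 0) ∧
      StrictAntiOn (Rfun Q) (Set.Ioi X) ∧ Tendsto (Rfun Q) atTop (nhds L) ∧
      (∀ s, 0 < s → L < Rfun Q s) := by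
  obtain ⟨⟨hH, hm3, hd, hdc⟩, -⟩ := hQ
  obtain ⟨hc, h0, hbdd, hA, hm, hlim⟩ := hH
  obtain ⟨δ, hδ0, hδ1, hne⟩ := hR
  have htop : Tendsto (Rfun Q) (nhdsWithin 0 (Set.Ioi 0)) atTop :=
    Rtop ⟨hc, h0, hbdd, hA, hm, hlim⟩
  have hRc := Rcont hc
  have hRdC := RderivCont hd hc hdc
  set X := 1/δ with hXdef
  have hX0 : 0 < X := by positivity
  have hXsub : Set.Ioi X ⊆ Set.Ioi (0:ℝ) := fun t ht => lt_trans hX0 ht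
  -- derivative negative on the tail
  have hTneg : ∀ s, X < s → deriv (Rfun Q) s < 0 := by
    intro s hs
    rcases lt_or_ge (deriv (Rfun Q) s) 0 with h | h
    · exact h
    exfalso
    have hsp : 0 < deriv (Rfun Q) s := lt_of_le_of_ne h (Ne.symm (hne s (Or.inr hs)))
    have hall : ∀ t ∈ Set.Ioi X, 0 < deriv (Rfun Q) t := by
      intro t ht
      rcases lt_or_ge (deriv (Rfun Q) t) 0 with h2 | h2
      · exfalso
        have := deriv_sign_const Set.ordConnected_Ioi hXsub hRdC
          (fun z hz => hne z (Or.inr hz)) ht (Set.mem_Ioi.2 hs) h2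
        linarith
      · exact lt_of_le_of_ne h2 (Ne.symm (hne t (Or.inr ht)))
    have hmono : StrictMonoOn (Rfun Q) (Set.Ioi X) := by
      refine strictMonoOn_of_deriv_pos (convex_Ioi _) (hRc.mono hXsub) ?_
      rw [interior_Ioi]; exact hall
    obtain ⟨p, hp, hpmin⟩ := exists_min hc htop (show (0:ℝ) < X + 1 by linarith)
    refine hEI ⟨p, hp.1, ?_⟩
    intro t ht
    rcases le_or_gt t (X + 1) with h1 | h1
    · exact hpmin t ⟨ht, h1⟩
    · have h2 : Rfun Q (X+1) < Rfun Q t :=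
        hmono (Set.mem_Ioi.2 (by linarith)) (Set.mem_Ioi.2 (by linarith)) h1
      exact le_trans (hpmin (X+1) ⟨by linarith, le_refl _⟩) h2.le
  have hTanti : StrictAntiOn (Rfun Q) (Set.Ioi X) := by
    refine strictAntiOn_of_deriv_neg (convex_Ioi _) (hRc.mono hXsub) ?_
    rw [interior_Ioi]; exact fun t ht => hTneg t ht
  -- lower bound for R on the tail
  obtain ⟨B, hB⟩ := hbdd
  have hBle : ∀ s : ℝ, B ≤ Q s := fun s => hB ⟨s, rfl⟩
  have hRlow : ∀ s : ℝ, X ≤ s → -(|B|/X) ≤ Rfun Q s := by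
    intro s hs
    have hs0 : 0 < s := lt_of_lt_of_le hX0 hs
    have h1 : B / s ≤ Rfun Q s := by
      rw [Rfun]
      exact div_le_div_of_nonneg_right (hBle s) hs0.le |>.trans (le_refl _)
    have h2 : -|B| / s ≤ B / s := div_le_div_of_nonneg_right (neg_abs_le B) hs0.le |>.trans (le_refl _)
    have h3 : |B| / s ≤ |B| / X := div_le_div_of_nonneg_left (abs_nonneg B) hX0 hs
    calc -(|B|/X) ≤ -(|B|/s) := by linarith
    _ = -|B|/s := by ring
    _ ≤ B / s := h2
    _ ≤ Rfun Q s := h1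
  have hBddB : BddBelow (Rfun Q '' Set.Ioi X) := by
    refine ⟨-(|B|/X), ?_⟩
    rintro y ⟨t, ht, rfl⟩
    exact hRlow t (le_of_lt ht)
  set L := sInf (Rfun Q '' Set.Ioi X) with hLdef
  have hLle : ∀ s, X < s → L ≤ Rfun Q s := fun s hs => csInf_le hBddB ⟨s, hs, rfl⟩
  have hImne : (Rfun Q '' Set.Ioi X).Nonempty := ⟨Rfun Q (X+1), ⟨X+1, Set.mem_Ioi.2 (by linarith), rfl⟩⟩
  have hLlim : Tendsto (Rfun Q) atTop (nhds L) := by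
    rw [tendsto_order]
    constructor
    · intro l hl
      filter_upwards [eventually_ge_atTop (X+1)] with s hs
      exact lt_of_lt_of_le hl (hLle s (by linarith))
    · intro v hv
      obtain ⟨y, ⟨w, hw, rfl⟩, hyv⟩ := (csInf_lt_iff hBddB hImne).1 hv
      filter_upwards [eventually_ge_atTop (w+1)] with s hs
      have : Rfun Q s < Rfun Q w := hTanti hw (Set.mem_Ioi.2 (by
        have := Set.mem_Ioi.1 hw; linarith)) (by linarith)
      linarith
  have hLltTail : ∀ s, X < s → L < Rfun Q s := by
    intro s hs
    have h1 : L ≤ Rfun Q (s+1) := hLle (s+1) (by linarith)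
    have h2 : Rfun Q (s+1) < Rfun Q s :=
      hTanti (Set.mem_Ioi.2 hs) (Set.mem_Ioi.2 (by linarith)) (by linarith)
    linarith
  have hL0 : 0 ≤ L := by
    have h1 : Tendsto (fun s : ℝ => B * s⁻¹) atTop (nhds 0) := by
      have := tendsto_inv_atTop_zero (𝕜 := ℝ)
      have h2 := this.const_mul B
      rwa [mul_zero] at h2
    refine le_of_tendsto_of_tendsto h1 hLlim ?_
    filter_upwards [eventually_ge_atTop (max X 1)] with s hs
    have hs0 : 0 < s := lt_of_lt_of_le (lt_of_lt_of_le zero_lt_one (le_max_right X 1)) hs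
    have : B / s ≤ Rfun Q s := by
      rw [Rfun]
      exact div_le_div_of_nonneg_right (hBle s) hs0.le |>.trans (le_refl _)
    rw [← div_eq_mul_inv]
    exact this
  -- L is a strict lower bound everywhere
  obtain ⟨p, hp, hpmin⟩ := exists_min hc htop hX0
  have hμL : L < Rfun Q p := by
    by_contra h
    push_neg at h
    refine hEI ⟨p, hp.1, ?_⟩
    intro t ht
    rcases le_or_gt t X with h1 | h1
    · exact hpmin t ⟨ht, h1⟩
    · exact le_trans h (hLltTail t h1).le
  have hLlt : ∀ s, 0 < s → L < Rfun Q s := by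
    intro s hs
    rcases le_or_gt s X with h1 | h1
    · exact lt_of_lt_of_le hμL (hpmin s ⟨hs, h1⟩)
    · exact hLltTail s h1
  exact ⟨X, L, hX0, hL0, hTneg, hTanti, hLlim, hLlt⟩

lemma part2 (hQ : HypHEL Q A m) (hR : HypHR Q) (hEI : EStarInfinite Q) :
    ¬ BddAbove (Aset Q) := by
  obtain ⟨X, L, hX0, hL0, hTneg, hTanti, hLlim, hLlt⟩ := tailFacts hQ hR hEI
  obtain ⟨⟨hH, hm3, hd, hdc⟩, -⟩ := hQ
  obtain ⟨hc, h0, hbdd, hA, hm, hlim⟩ := hH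
  have htop : Tendsto (Rfun Q) (nhdsWithin 0 (Set.Ioi 0)) atTop :=
    Rtop ⟨hc, h0, hbdd, hA, hm, hlim⟩
  rintro ⟨b, hb⟩
  set Y := max b X with hYdef
  have hY0 : 0 < Y + 1 := by
    have := le_max_right b X; linarith [hX0]
  obtain ⟨p, hp, hpmin⟩ := exists_min hc htop hY0
  have hμL : L < Rfun Q p := hLlt p hp.1
  have h1 : ∀ᶠ s in atTop, Rfun Q s < Rfun Q p := hLlim.eventually_lt_const hμL
  obtain ⟨s, hs1, hs2⟩ := (h1.and (eventually_ge_atTop (Y+2))).exists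
  have hsX : X < s := by
    have := le_max_right b X; linarith
  have hs0 : 0 < s := hX0.trans hsX
  have hmem : s ∈ Aset Q := by
    refine ⟨hs0, hTneg s hsX, ?_⟩
    intro t ht0 hts
    rcases le_or_gt t (Y+1) with h | h
    · exact lt_of_lt_of_le hs1 (hpmin t ⟨ht0, h⟩)
    · have htX : X < t := by
        have := le_max_right b X; linarith
      exact hTanti (Set.mem_Ioi.2 htX) (Set.mem_Ioi.2 hsX) hts
  have := hb hmem
  have hbY : b ≤ Y := le_max_left b X
  linarith

lemma part3 (hQ : HypHEL Q A m) (hR : HypHR Q) (hEI : EStarInfinite Q)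
    (z₀ emin emax : ℝ)
    (hZbdd : BddAbove {z : ℝ | 0 < z ∧ ∀ z' ∈ Set.Ioo 0 z,
      Set.Subsingleton {s : ℝ | 0 < s ∧ Rfun Q s = z'}})
    (hz₀ : z₀ = sSup {z : ℝ | 0 < z ∧ ∀ z' ∈ Set.Ioo 0 z,
      Set.Subsingleton {s : ℝ | 0 < s ∧ Rfun Q s = z'}})
    (heminDef : emin = sInf {s : ℝ | 0 < s ∧ Rfun Q s = z₀})
    (hemaxDef : emax = sSup {s : ℝ | 0 < s ∧ Rfun Q s = z₀}) :
    Aset Q ⊆ Set.Iio emin ∪ Set.Ioi emax := by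
  obtain ⟨X, L, hX0, hL0, hTneg, hTanti, hLlim, hLlt⟩ := tailFacts hQ hR hEI
  obtain ⟨⟨hH, hm3, hd, hdc⟩, -⟩ := hQ
  obtain ⟨hc, h0, hbdd, hA, hm, hlim⟩ := hH
  have htop : Tendsto (Rfun Q) (nhdsWithin 0 (Set.Ioi 0)) atTop :=
    Rtop ⟨hc, h0, hbdd, hA, hm, hlim⟩
  have hRc := Rcont hc
  set Z := {z : ℝ | 0 < z ∧ ∀ z' ∈ Set.Ioo 0 z,
      Set.Subsingleton {s : ℝ | 0 < s ∧ Rfun Q s = z'}} with hZdef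
  set S := {s : ℝ | 0 < s ∧ Rfun Q s = z₀} with hSdef
  -- the minimum of R on (0, X]
  obtain ⟨p, hp, hpmin⟩ := exists_min hc htop hX0
  have hμL : L < Rfun Q p := hLlt p hp.1
  have hμZ : Rfun Q p ∈ Z := by
    refine ⟨lt_of_le_of_lt hL0 hμL, ?_⟩
    intro z' hz' s₁ hs₁ s₂ hs₂
    have key : ∀ t : ℝ, (0 < t ∧ Rfun Q t = z') → X < t := by
      rintro t ⟨ht0, htz⟩
      by_contra h
      push_neg at h
      have h2 := hpmin t ⟨ht0, h⟩
      rw [htz] at h2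
      exact absurd h2 (not_le.2 hz'.2)
    exact hTanti.injOn (Set.mem_Ioi.2 (key s₁ hs₁)) (Set.mem_Ioi.2 (key s₂ hs₂))
      (by rw [hs₁.2, hs₂.2])
  have hZne : Z.Nonempty := ⟨Rfun Q p, hμZ⟩
  have hz₀μ : Rfun Q p ≤ z₀ := hz₀ ▸ le_csSup hZbdd hμZ
  have hz₀L : L < z₀ := lt_of_lt_of_le hμL hz₀μ
  have hz₀0 : 0 < z₀ := lt_of_le_of_lt hL0 hz₀L
  have hsub : ∀ z', 0 < z' → z' < z₀ →
      Set.Subsingleton {s : ℝ | 0 < s ∧ Rfun Q s = z'} := by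
    intro z' h1 h2
    rw [hz₀] at h2
    obtain ⟨z, hzZ, hz⟩ := (lt_csSup_iff hZbdd hZne).1 h2
    exact hzZ.2 z' ⟨h1, hz⟩
  -- lower bound ε for solutions of levels ≤ z₀ + 1
  obtain ⟨ε, hε, hεsub⟩ := mem_nhdsGT_iff_exists_Ioo_subset.1
    (htop.eventually (eventually_gt_atTop (z₀ + 1)))
  have hε0 : (0:ℝ) < ε := hε
  -- upper bound w
  have h2ev : ∀ᶠ s in atTop, Rfun Q s < (L + z₀)/2 :=
    hLlim.eventually_lt_const (by linarith)
  obtain ⟨w, hwlt, hwX⟩ := (h2ev.and (eventually_ge_atTop (X+1))).exists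
  have hwX' : X < w := by linarith
  have hwbound : ∀ s, w ≤ s → Rfun Q s < (L + z₀)/2 := by
    intro s hs
    rcases eq_or_lt_of_le hs with h | h
    · rw [← h]; exact hwlt
    · exact lt_trans (hTanti (Set.mem_Ioi.2 hwX') (Set.mem_Ioi.2 (lt_trans hwX' h)) h) hwlt
  have hSsub : S ⊆ Set.Icc (ε/2) w := by
    rintro t ⟨ht0, htz⟩
    constructor
    · by_contra h
      push_neg at h
      have h2 := hεsub ⟨ht0, by linarith⟩
      simp only [Set.mem_setOf_eq] at h2
      rw [htz] at h2
      linarith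
    · by_contra h
      push_neg at h
      have h2 := hwbound t (le_of_lt h)
      rw [htz] at h2
      linarith
  intro s hsA
  obtain ⟨hs0, hsd, hsmin⟩ := hsA
  by_contra hnot
  simp only [Set.mem_union, Set.mem_Iio, Set.mem_Ioi, not_or, not_lt] at hnot
  obtain ⟨h1s, h2s⟩ := hnot
  rcases Set.eq_empty_or_nonempty S with hSe | hSne
  · rw [hemaxDef, hSe, Real.sSup_empty] at h2s
    linarith
  have hSclosed : IsClosed S := by
    have hIccsub : Set.Icc (ε/2) w ⊆ Set.Ioi (0:ℝ) :=
      fun t ht => lt_of_lt_of_le (by linarith) ht.1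
    have hSeq : S = Set.Icc (ε/2) w ∩ Rfun Q ⁻¹' {z₀} := by
      ext t
      constructor
      · intro ht; exact ⟨hSsub ht, ht.2⟩
      · rintro ⟨ht1, ht2⟩; exact ⟨lt_of_lt_of_le (by linarith) ht1.1, ht2⟩
    rw [hSeq]
    exact ContinuousOn.preimage_isClosed_of_isClosed (hRc.mono hIccsub)
      isClosed_Icc isClosed_singleton
  have hSbddB : BddBelow S := ⟨ε/2, fun t ht => (hSsub ht).1⟩
  have hSbddA : BddAbove S := ⟨w, fun t ht => (hSsub ht).2⟩
  have hminS : emin ∈ S := heminDef ▸ hSclosed.csInf_mem hSne hSbddB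
  have hmaxS : emax ∈ S := hemaxDef ▸ hSclosed.csSup_mem hSne hSbddA
  -- case analysis
  rcases eq_or_lt_of_le h1s with h1e | h1e
  · -- s = emin
    have hsz₀ : Rfun Q s = z₀ := by rw [← h1e]; exact hminS.2
    rcases eq_or_lt_of_le h2s with h2e | h2e
    · -- s = emin = emax : injectivity near s forces z₀ + η ∈ Z
      have hSsing : ∀ t ∈ S, t = s := by
        intro t ht
        have hle : t ≤ emax := hemaxDef ▸ le_csSup hSbddA ht
        have hge : emin ≤ t := heminDef ▸ csInf_le hSbddB ht
        rw [h1e] at hge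
        rw [← h2e] at hle
        exact le_antisymm hle hge
      have hcd : ContinuousAt (deriv (Rfun Q)) s := RderivContAt hd hc hdc hs0
      have h3 : ∀ᶠ t in nhds s, deriv (Rfun Q) t < 0 ∧ 0 < t := by
        have hev1 : ∀ᶠ t in nhds s, deriv (Rfun Q) t < 0 :=
          hcd.tendsto.eventually_lt_const hsd
        have hev2 : ∀ᶠ t in nhds s, 0 < t := eventually_gt_nhds hs0
        exact hev1.and hev2
      rw [Metric.eventually_nhds_iff_ball] at h3
      obtain ⟨r, hr0, hrball⟩ := h3
      set a := s - r/2 with hadef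
      set b' := s + r/2 with hbdef
      have hIccball : Set.Icc a b' ⊆ Metric.ball s r := by
        intro t ht
        rw [Real.ball_eq_Ioo]
        constructor
        · have := ht.1; simp only [hadef] at this ⊢; linarith
        · have := ht.2; simp only [hbdef] at this ⊢; linarith
      have ha0 : 0 < a := (hrball a (hIccball ⟨le_refl a, by simp only [hadef, hbdef]; linarith⟩)).2
      have hanti' : StrictAntiOn (Rfun Q) (Set.Icc a b') := by
        refine strictAntiOn_of_deriv_neg (convex_Icc _ _)
          (hRc.mono (fun t ht => lt_of_lt_of_le ha0 ht.1)) ?_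
        intro t ht
        rw [interior_Icc] at ht
        exact (hrball t (hIccball ⟨ht.1.le, ht.2.le⟩)).1
      -- positive distance from z₀ off the interval (a, b')
      set Kc := Set.Icc (ε/2) w \ Set.Ioo a b' with hKcdef
      have hKcpt : IsCompact Kc := isCompact_Icc.diff isOpen_Ioo
      have hKc0 : ∀ t ∈ Kc, 0 < t := fun t ht => lt_of_lt_of_le (by linarith) ht.1.1
      obtain ⟨c, hc0, hcbound⟩ :
          ∃ c, 0 < c ∧ ∀ t ∈ Kc, c ≤ |Rfun Q t - z₀| := by
        rcases Set.eq_empty_or_nonempty Kc with hKe | hKne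
        · exact ⟨1, one_pos, by rw [hKe]; intro t ht; exact absurd ht (Set.notMem_empty t)⟩
        · have hcont : ContinuousOn (fun t => |Rfun Q t - z₀|) Kc :=
            (((hRc.mono (fun t (ht : t ∈ Kc) => Set.mem_Ioi.2 (hKc0 t ht))).sub
              continuousOn_const)).abs
          obtain ⟨t₀, ht₀, hmin₀⟩ := hKcpt.exists_isMinOn hKne hcont
          refine ⟨|Rfun Q t₀ - z₀|, ?_, fun t ht => hmin₀ ht⟩
          rcases eq_or_lt_of_le (abs_nonneg (Rfun Q t₀ - z₀)) with h | h
          · exfalso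
            have hz : Rfun Q t₀ = z₀ := by
              have := abs_eq_zero.1 h.symm
              linarith [sub_eq_zero.1 this]
            have ht₀S : t₀ ∈ S := ⟨hKc0 t₀ ht₀, hz⟩
            have := hSsing t₀ ht₀S
            rw [this] at ht₀
            refine ht₀.2 ⟨?_, ?_⟩
            · simp only [hadef]; linarith
            · simp only [hbdef]; linarith
          · exact h
      set η := min c (min 1 ((z₀ - L)/2)) with hηdef
      have hη0 : 0 < η := lt_min hc0 (lt_min one_pos (by linarith))
      have hηc : η ≤ c := min_le_left _ _
      have hη1 : η ≤ 1 := le_trans (min_le_right _ _) (min_le_left _ _)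
      have hηL : η ≤ (z₀ - L)/2 := le_trans (min_le_right _ _) (min_le_right _ _)
      have hZmem : z₀ + η ∈ Z := by
        refine ⟨by linarith, ?_⟩
        intro z' hz' x hx y hy
        rcases lt_or_ge z' z₀ with h | h
        · exact hsub z' hz'.1 h hx hy
        · have hloc : ∀ t : ℝ, (0 < t ∧ Rfun Q t = z') → t ∈ Set.Icc a b' := by
            rintro t ⟨ht0, htz⟩
            have htIcc : t ∈ Set.Icc (ε/2) w := by
              constructor
              · by_contra hh
                push_neg at hh
                have h2 := hεsub ⟨ht0, by linarith⟩
                simp only [Set.mem_setOf_eq] at h2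
                rw [htz] at h2
                have := hz'.2
                linarith
              · by_contra hh
                push_neg at hh
                have h2 := hwbound t (le_of_lt hh)
                rw [htz] at h2
                linarith
            by_contra hh
            have hKcmem : t ∈ Kc := ⟨htIcc, fun hcon => hh ⟨hcon.1.le, hcon.2.le⟩⟩
            have h2 := hcbound t hKcmem
            rw [htz, abs_of_nonneg (by linarith)] at h2
            have := hz'.2
            linarith
          exact hanti'.injOn (hloc x hx) (hloc y hy) (by rw [hx.2, hy.2])
      have hle := le_csSup hZbdd hZmem
      rw [← hz₀] at hle
      linarith
    · -- s = emin < emax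
      obtain ⟨t, hts, htmax, htlt⟩ := exists_right_lt (RdiffAt hd hs0) hsd h2e
      rw [hsz₀] at htlt
      have ht0 : 0 < t := hs0.trans hts
      set z' := (max L (Rfun Q t) + z₀)/2 with hz'def
      have hmax : max L (Rfun Q t) < z₀ := max_lt hz₀L htlt
      have hz'lt : z' < z₀ := by
        have := le_max_left L (Rfun Q t); simp only [hz'def]; linarith
      have hz'gtL : L < z' := by
        have := le_max_left L (Rfun Q t); simp only [hz'def]; linarith
      have hz'gtR : Rfun Q t < z' := by
        have := le_max_right L (Rfun Q t); simp only [hz'def]; linarith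
      have hz'0 : 0 < z' := lt_of_le_of_lt hL0 hz'gtL
      have hIcc1 : Set.Icc s t ⊆ Set.Ioi (0:ℝ) := fun u hu => lt_of_lt_of_le hs0 hu.1
      have hIcc2 : Set.Icc t emax ⊆ Set.Ioi (0:ℝ) := fun u hu => lt_of_lt_of_le ht0 hu.1
      obtain ⟨t₁, ht₁, ht₁z⟩ := intermediate_value_Ioo' hts.le (hRc.mono hIcc1)
        (show z' ∈ Set.Ioo (Rfun Q t) (Rfun Q s) by
          rw [hsz₀]; exact ⟨hz'gtR, hz'lt⟩)
      obtain ⟨t₂, ht₂, ht₂z⟩ := intermediate_value_Ioo htmax.le (hRc.mono hIcc2)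
        (show z' ∈ Set.Ioo (Rfun Q t) (Rfun Q emax) by
          rw [hmaxS.2]; exact ⟨hz'gtR, hz'lt⟩)
      have heq : t₁ = t₂ := hsub z' hz'0 hz'lt
        ⟨hs0.trans ht₁.1, ht₁z⟩ ⟨ht0.trans ht₂.1, ht₂z⟩
      linarith [ht₁.2, ht₂.1]
  · -- emin < s
    have hsz : Rfun Q s < z₀ := by
      have := hsmin emin hminS.1 h1e
      rw [hminS.2] at this
      exact this
    rcases eq_or_lt_of_le h2s with h2e | h2e
    · rw [h2e] at hsz
      rw [hmaxS.2] at hsz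
      exact lt_irrefl z₀ hsz
    · set z' := (max L (Rfun Q s) + z₀)/2 with hz'def
      have hmax : max L (Rfun Q s) < z₀ := max_lt hz₀L hsz
      have hz'lt : z' < z₀ := by
        have := le_max_left L (Rfun Q s); simp only [hz'def]; linarith
      have hz'gtL : L < z' := by
        have := le_max_left L (Rfun Q s); simp only [hz'def]; linarith
      have hz'gtR : Rfun Q s < z' := by
        have := le_max_right L (Rfun Q s); simp only [hz'def]; linarith
      have hz'0 : 0 < z' := lt_of_le_of_lt hL0 hz'gtL
      have hIcc1 : Set.Icc emin s ⊆ Set.Ioi (0:ℝ) := fun u hu => lt_of_lt_of_le hminS.1 hu.1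
      have hIcc2 : Set.Icc s emax ⊆ Set.Ioi (0:ℝ) := fun u hu => lt_of_lt_of_le hs0 hu.1
      obtain ⟨t₁, ht₁, ht₁z⟩ := intermediate_value_Ioo' h1e.le (hRc.mono hIcc1)
        (show z' ∈ Set.Ioo (Rfun Q s) (Rfun Q emin) by
          rw [hminS.2]; exact ⟨hz'gtR, hz'lt⟩)
      obtain ⟨t₂, ht₂, ht₂z⟩ := intermediate_value_Ioo h2e.le (hRc.mono hIcc2)
        (show z' ∈ Set.Ioo (Rfun Q s) (Rfun Q emax) by
          rw [hmaxS.2]; exact ⟨hz'gtR, hz'lt⟩)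
      have heq : t₁ = t₂ := hsub z' hz'0 hz'lt
        ⟨hminS.1.trans ht₁.1, ht₁z⟩ ⟨hs0.trans ht₂.1, ht₂z⟩
      linarith [ht₁.2, ht₂.1]

end Stmt9Aux
/-- Bounds on the maximal height: `sup 𝒜 = e_*` (hence `𝒜 ⊆ (0,e_*)`); moreover, when
`e_* = +∞` and the level `z₀` at which `R` ceases to be injective is finite,
`𝒜 ⊆ (0, e_min) ∪ (e_max, +∞)`. -/
theorem stmt9 (Q : ℝ → ℝ) (A m : ℝ) (hQ : HypHEL Q A m) (hR : HypHR Q) :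
    (∀ e : ℝ, IsEStar Q e → IsLUB (Aset Q) e ∧ Aset Q ⊆ Set.Ioo 0 e) ∧
    (EStarInfinite Q →
      ¬ BddAbove (Aset Q) ∧
      ∀ z₀ emin emax : ℝ,
        BddAbove {z : ℝ | 0 < z ∧ ∀ z' ∈ Set.Ioo 0 z,
          Set.Subsingleton {s : ℝ | 0 < s ∧ Rfun Q s = z'}} →
        z₀ = sSup {z : ℝ | 0 < z ∧ ∀ z' ∈ Set.Ioo 0 z,
          Set.Subsingleton {s : ℝ | 0 < s ∧ Rfun Q s = z'}} →
        emin = sInf {s : ℝ | 0 < s ∧ Rfun Q s = z₀} →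
        emax = sSup {s : ℝ | 0 < s ∧ Rfun Q s = z₀} →
        Aset Q ⊆ Set.Iio emin ∪ Set.Ioi emax) := by
  constructor
  · intro e he
    exact Stmt9Aux.part1 hQ hR he
  · intro hEI
    refine ⟨Stmt9Aux.part2 hQ hR hEI, ?_⟩
    intro z₀ emin emax hb h1 h2 h3
    exact Stmt9Aux.part3 hQ hR hEI z₀ emin emax hb h1 h2 h3
end
end

section
/- Assume N = 1 and Q satisfies (H-EL) and (H-R). Then there exists a constant C > 0 such that for every K ≥ 1 there exists δ_K > 0 with the following property: for every u₀ ∈ 𝒜 ∩ [1/K, K] (and, in case lim_{s→+∞} R(s) < +∞, for every u₀ ∈ 𝒜 ∩ [1/K, +∞)), the solution u of (P_{u₀}) with supp u = [−r̄, r̄] satisfies u(x) ≥ C·(r̄ − x)^{2/(m+1)} for all x ∈ (r̄ − δ_K, r̄). -/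
open MeasureTheory Filter Set

noncomputable section

set_option maxHeartbeats 2000000 in
/-- Uniform a-priori lower bound near the contact line: there is `C > 0` such that for all
`K ≥ 1` there is `δ_K > 0` with `u(x) ≥ C(r̄-x)^{2/(m+1)}` on `(r̄-δ_K, r̄)` for every
solution of `(P_{u₀})` with `u₀ ∈ 𝒜 ∩ [1/K, K]` (or `u₀ ∈ 𝒜 ∩ [1/K, ∞)` when
`R(+∞) < ∞`). -/
theorem stmt12 (Q : ℝ → ℝ) (A m : ℝ) (hQ : HypHEL Q A m) (hR : HypHR Q) :
    ∃ C > (0:ℝ), ∀ K : ℝ, 1 ≤ K → ∃ δ > (0:ℝ),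
      ∀ (u₀ : ℝ) (u : ℝ → ℝ) (r : ℝ),
        u₀ ∈ Aset Q → 1/K ≤ u₀ →
        (u₀ ≤ K ∨ ∃ L : ℝ, Filter.Tendsto (Rfun Q) Filter.atTop (nhds L)) →
        IsPSol Q u₀ u (r : EReal) → tsupport u = Set.Icc (-r) r →
        ∀ x : ℝ, r - δ < x → x < r → C * (r - x) ^ ((2:ℝ)/(m+1)) ≤ u x := by
  classical
  obtain ⟨⟨⟨hQcont, hQzero, hQbdd, hA, hm, htend⟩, hm3, hQdiff, hQdcont⟩, -⟩ := hQ
  clear hR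
  -- lower bound for Q
  obtain ⟨b0, hb0⟩ := hQbdd
  have hb0' : ∀ s, b0 ≤ Q s := fun s => hb0 ⟨s, rfl⟩
  -- asymptotic lower bound near 0
  obtain ⟨sa, hsa, hQlow⟩ : ∃ sa > (0:ℝ), ∀ s : ℝ, 0 < s → s < sa →
      A/2 * s ^ (1-m) ≤ Q s := by
    have h12 : ∀ᶠ s in nhdsWithin (0:ℝ) (Set.Ioi 0), 1/2 < Q s / (A * s ^ (1 - m)) :=
      htend.eventually (eventually_gt_nhds (by norm_num))
    rw [eventually_nhdsWithin_iff, Metric.eventually_nhds_iff] at h12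
    obtain ⟨ε, hε, hball⟩ := h12
    refine ⟨ε, hε, fun s hs hsε => ?_⟩
    have hd : dist s 0 < ε := by rw [Real.dist_eq, sub_zero, abs_of_pos hs]; exact hsε
    have h := hball hd hs
    have hpos : 0 < A * s ^ (1 - m) := by positivity
    have := (lt_div_iff₀ hpos).1 h
    linarith
  -- the exponent constants
  set p : ℝ := (m+1)/2 with hp_def
  set q : ℝ := 2/(m+1) with hq_def
  have hp1 : 1 ≤ p := by rw [hp_def]; linarith
  have hp0 : 0 < p := by linarith
  have hqp : q * p = 1 := by rw [hq_def, hp_def]; field_simp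
  set c₀ : ℝ := Real.sqrt (A/2) with hc₀_def
  have hc₀ : 0 < c₀ := Real.sqrt_pos.2 (by linarith)
  have hc₀sq : c₀^2 = A/2 := Real.sq_sqrt (by linarith)
  refine ⟨c₀ ^ q, Real.rpow_pos_of_pos hc₀ q, fun K hK => ?_⟩
  have hK0 : (0:ℝ) < K := by linarith
  -- per-K constants
  set M : ℝ := |Rfun Q (1/(2*K))| + |b0| * K + 1 with hM_def
  have hM : 0 < M := by positivity
  set s₁ : ℝ := min (min (sa/2) (1/(2*K))) ((A/(4*M)) ^ (1/m : ℝ)) with hs₁_def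
  have hs₁pos : 0 < s₁ := by
    apply lt_min (lt_min (by linarith) (by positivity))
    exact Real.rpow_pos_of_pos (by positivity) _
  have hs₁sa : s₁ < sa := lt_of_le_of_lt (le_trans (min_le_left _ _) (min_le_left _ _))
    (by linarith)
  have hs₁K : s₁ ≤ 1/(2*K) := le_trans (min_le_left _ _) (min_le_right _ _)
  have hs₁M : s₁ ≤ (A/(4*M)) ^ (1/m : ℝ) := min_le_right _ _
  -- key coercivity estimate
  have hP1 : ∀ R₀ : ℝ, |R₀| ≤ M → ∀ s : ℝ, 0 < s → s ≤ s₁ →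
      A/4 * s ^ (1-m) ≤ Q s - R₀ * s := by
    intro R₀ hR₀ s hs hss₁
    have hq1 : A/2 * s ^ (1-m) ≤ Q s := hQlow s hs (lt_of_le_of_lt hss₁ hs₁sa)
    have hsm : s ^ (m:ℝ) ≤ A/(4*M) := by
      have h1 : s ^ (m:ℝ) ≤ ((A/(4*M)) ^ (1/m : ℝ)) ^ (m:ℝ) :=
        Real.rpow_le_rpow hs.le (le_trans hss₁ hs₁M) (by linarith)
      have h2 : ((A/(4*M)) ^ (1/m : ℝ)) ^ (m:ℝ) = A/(4*M) := by
        rw [← Real.rpow_mul (by positivity : (0:ℝ) ≤ A/(4*M))]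
        rw [show (1/m) * m = 1 by field_simp, Real.rpow_one]
      linarith
    have hMs : M * s ≤ A/4 * s ^ (1-m) := by
      have h3 : M * s ^ (m:ℝ) ≤ A/4 := by
        have := mul_le_mul_of_nonneg_left hsm hM.le
        calc M * s ^ (m:ℝ) ≤ M * (A/(4*M)) := this
          _ = A/4 := by field_simp
      have h4 := mul_le_mul_of_nonneg_right h3
        (le_of_lt (Real.rpow_pos_of_pos hs (1-m)))
      have h5 : s ^ (m:ℝ) * s ^ ((1:ℝ)-m) = s := by
        rw [← Real.rpow_add hs, show m + (1-m) = 1 by ring, Real.rpow_one]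
      calc M * s = M * (s ^ (m:ℝ) * s ^ ((1:ℝ)-m)) := by rw [h5]
        _ = M * s ^ (m:ℝ) * s ^ ((1:ℝ)-m) := by ring
        _ ≤ A/4 * s ^ (1-m) := h4
    have hRs : R₀ * s ≤ M * s := mul_le_mul_of_nonneg_right
      (le_trans (le_abs_self _) hR₀) hs.le
    calc A/4 * s ^ (1-m) = A/2 * s ^ (1-m) - A/4 * s ^ (1-m) := by ring
      _ ≤ Q s - R₀ * s := sub_le_sub hq1 (le_trans hRs hMs)
  -- max of Q on the band
  obtain ⟨z₀, hz₀mem, hz₀max⟩ := (isCompact_Icc (a := s₁/2) (b := s₁)).exists_isMaxOn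
    ⟨s₁, by constructor <;> linarith⟩
    (hQcont.mono (fun z hz => lt_of_lt_of_le (by linarith : (0:ℝ) < s₁/2) hz.1))
  have hz₀max' : ∀ s ∈ Icc (s₁/2) s₁, Q s ≤ Q z₀ := fun s hs => hz₀max hs
  set G : ℝ := Real.sqrt (max 1 (2*(Q z₀ + M*s₁))) with hG_def
  have hG1 : 1 ≤ G := by
    have h1 : (1:ℝ) ≤ max 1 (2*(Q z₀ + M*s₁)) := le_max_left _ _
    calc (1:ℝ) = Real.sqrt 1 := Real.sqrt_one.symm
      _ ≤ G := Real.sqrt_le_sqrt h1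
  have hG0 : 0 < G := by linarith
  have hGsq : 2*(Q z₀ + M*s₁) ≤ G^2 := by
    rw [hG_def, Real.sq_sqrt (le_trans zero_le_one (le_max_left _ _))]
    exact le_max_right _ _
  refine ⟨s₁/(4*G), by positivity, ?_⟩
  set δ : ℝ := s₁/(4*G) with hδ_def
  have hδs₁ : δ < s₁ := by
    rw [hδ_def, div_lt_iff₀ (by positivity)]
    nlinarith only [hs₁pos, hG1]
  intro u₀ u r hAmem hKu₀ hcase hsol hsupp x hx1 hx2
  obtain ⟨hrpos, hupos, heven, hucont, hset, hC2, hPDE, hu0, hu'0⟩ := hsol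
  have hr : 0 < r := EReal.coe_pos.1 hrpos
  have hu₀pos : 0 < u₀ := lt_of_lt_of_le (by positivity) hKu₀
  have hiff : ∀ z : ℝ, 0 < u z ↔ -r < z ∧ z < r := by
    intro z
    have h := Set.ext_iff.1 hset z
    simpa [← EReal.coe_neg, EReal.coe_lt_coe_iff] using h
  have hSeq : {x : ℝ | 0 < u x} = Ioo (-r) r := by
    ext z; rw [mem_setOf_eq, hiff z, mem_Ioo]
  have hur : u r = 0 := by
    have h1 : ¬ (0 < u r) := by rw [hiff]; intro h; linarith [h.2]
    linarith [hupos r, not_lt.1 h1]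
  set R₀ : ℝ := Rfun Q u₀ with hR₀_def
  have hR₀u₀ : R₀ * u₀ = Q u₀ := by
    rw [hR₀_def, Rfun]; field_simp
  -- bound on |R₀|
  have hR₀M : |R₀| ≤ M := by
    obtain ⟨-, -, hmin⟩ := hAmem
    have h2Kpos : 0 < 1/(2*K) := by positivity
    have h2K : 1/(2*K) < u₀ := by
      have : 1/(2*K) < 1/K := by
        rw [div_lt_div_iff₀ (by positivity) hK0]; nlinarith only [hK0]
      linarith
    have hup : R₀ ≤ |Rfun Q (1/(2*K))| :=
      le_trans (hmin _ h2Kpos h2K).le (le_abs_self _)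
    have hlow : -(|b0| * K) ≤ R₀ := by
      have h1 : -|b0| ≤ Q u₀ := le_trans (neg_abs_le b0) (hb0' u₀)
      have h2 : -|b0| / u₀ ≤ Q u₀ / u₀ := by
        gcongr
      have h3 : 1/u₀ ≤ K := by
        rw [div_le_iff₀ hu₀pos]
        calc (1:ℝ) = K * (1/K) := by field_simp
          _ ≤ K * u₀ := mul_le_mul_of_nonneg_left hKu₀ hK0.le
      have h4 : -(|b0| * K) ≤ -|b0| / u₀ := by
        rw [neg_div, neg_le_neg_iff]
        calc |b0| / u₀ = |b0| * (1/u₀) := by ring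
          _ ≤ |b0| * K := mul_le_mul_of_nonneg_left h3 (abs_nonneg b0)
      exact le_trans h4 (by rw [hR₀_def, Rfun]; exact h2)
    rw [abs_le]
    constructor
    · rw [hM_def]
      linarith only [hlow, abs_nonneg (Rfun Q (1/(2*K)))]
    · rw [hM_def]
      linarith only [hup, abs_nonneg b0, mul_nonneg (abs_nonneg b0) hK0.le]
  -- differentiability infrastructure
  have hSopen : IsOpen {x : ℝ | 0 < u x} := by rw [hSeq]; exact isOpen_Ioo
  have hC2' : ContDiffOn ℝ 2 u (Ioo (-r) r) := hSeq ▸ hC2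
  have hud : ∀ z ∈ Ioo (-r) r, HasDerivAt u (deriv u z) z := by
    intro z hz
    exact ((hC2'.differentiableOn two_ne_zero).differentiableAt
      (isOpen_Ioo.mem_nhds hz)).hasDerivAt
  have hC1d : ContDiffOn ℝ 1 (deriv u) (Ioo (-r) r) :=
    hC2'.deriv_of_isOpen isOpen_Ioo (by norm_num)
  have hudd : ∀ z ∈ Ioo (-r) r, HasDerivAt (deriv u) (deriv (deriv u) z) z := by
    intro z hz
    exact ((hC1d.differentiableOn one_ne_zero).differentiableAt
      (isOpen_Ioo.mem_nhds hz)).hasDerivAt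
  have hu'cont : ContinuousOn (deriv u) (Ioo (-r) r) := hC1d.continuousOn
  have hPDE' : ∀ z : ℝ, -r < z → z < r →
      deriv (deriv u) z = deriv Q (u z) - R₀ := by
    intro z h1 h2
    have hz1 : -(r:EReal) < (z:EReal) := by
      rw [← EReal.coe_neg]; exact_mod_cast h1
    have hz2 : (z:EReal) < (r:EReal) := by exact_mod_cast h2
    have := hPDE z hz1 hz2
    linarith [this]
  -- the energy function and its vanishing derivative
  set E : ℝ → ℝ := fun t => (deriv u t)^2/2 - Q (u t) + R₀ * u t with hE_def
  have hE0 : ∀ z ∈ Ioo (-r) r, HasDerivAt E 0 z := by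
    intro z hz
    have huz : 0 < u z := (hiff z).2 ⟨hz.1, hz.2⟩
    have h1 := hud z hz
    have h2 := hudd z hz
    have h3 : HasDerivAt (fun t => Q (u t)) (deriv Q (u z) * deriv u z) z :=
      ((hQdiff (u z) huz).hasDerivAt).comp z h1
    have h4 : HasDerivAt (fun t => (deriv u t)^2/2)
        (((2:ℕ) * (deriv u z)^(2-1) * deriv (deriv u) z)/2) z := (h2.pow 2).div_const 2
    have h5 : HasDerivAt E
        (((2:ℕ) * (deriv u z)^(2-1) * deriv (deriv u) z)/2
          - deriv Q (u z) * deriv u z + R₀ * deriv u z) z :=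
      (h4.sub h3).add (h1.const_mul R₀)
    convert h5 using 1
    rw [hPDE' z hz.1 hz.2]
    push_cast
    ring
  -- the first integral
  have hFI : ∀ t : ℝ, -r < t → t < r → (deriv u t)^2 = 2*(Q (u t) - R₀ * u t) := by
    intro t ht1 ht2
    have h0mem : (0:ℝ) ∈ Ioo (-r) r := ⟨by linarith, hr⟩
    have htmem : t ∈ Ioo (-r) r := ⟨ht1, ht2⟩
    have hJsub : Icc (min 0 t) (max 0 t) ⊆ Ioo (-r) r := by
      intro z hz
      constructor
      · exact lt_of_lt_of_le (lt_min (by linarith) ht1) hz.1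
      · exact lt_of_le_of_lt hz.2 (max_lt hr ht2)
    have hEcont : ContinuousOn E (Icc (min 0 t) (max 0 t)) := fun z hz =>
      ((hE0 z (hJsub hz)).continuousAt).continuousWithinAt
    have hEdiff : DifferentiableOn ℝ E (interior (Icc (min 0 t) (max 0 t))) := by
      intro z hz
      rw [interior_Icc] at hz
      exact ((hE0 z (hJsub (Ioo_subset_Icc_self hz))).differentiableAt).differentiableWithinAt
    have hEderiv : ∀ z ∈ interior (Icc (min 0 t) (max 0 t)), deriv E z = 0 := by
      intro z hz
      rw [interior_Icc] at hz
      exact (hE0 z (hJsub (Ioo_subset_Icc_self hz))).deriv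
    have hmono := monotoneOn_of_deriv_nonneg (convex_Icc _ _) hEcont hEdiff
      (fun z hz => (hEderiv z hz).ge)
    have hanti := antitoneOn_of_deriv_nonpos (convex_Icc _ _) hEcont hEdiff
      (fun z hz => (hEderiv z hz).le)
    have h0J : (0:ℝ) ∈ Icc (min 0 t) (max 0 t) := ⟨min_le_left _ _, le_max_left _ _⟩
    have htJ : t ∈ Icc (min 0 t) (max 0 t) := ⟨min_le_right _ _, le_max_right _ _⟩
    have hEt0 : E t = E 0 := by
      rcases le_total 0 t with h | h
      · exact le_antisymm (hanti h0J htJ h) (hmono h0J htJ h)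
      · exact le_antisymm (hmono htJ h0J h) (hanti htJ h0J h)
    have hE00 : deriv u 0 ^ 2/2 - Q (u 0) + R₀ * u 0 = 0 := by
      rw [hu'0, hu0, ← hR₀u₀]; ring
    simp only [hE_def] at hEt0
    linarith [hEt0, hE00]
  -- Claim 1: u is small near the boundary
  have hclaim1 : ∀ y : ℝ, r - δ < y → y < r → 0 < u y → u y < s₁ := by
    intro y hy1 hy2 hy3
    by_contra hcon
    push_neg at hcon
    have hyS : -r < y := ((hiff y).1 hy3).1
    -- first time u drops to s₁/2
    set T : Set ℝ := {t : ℝ | t ∈ Icc y r ∧ u t ≤ s₁/2} with hT_def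
    have hTr : r ∈ T := ⟨⟨hy2.le, le_rfl⟩, by rw [hur]; linarith⟩
    have hTclosed : IsClosed T := by
      have : T = Icc y r ∩ {t : ℝ | u t ≤ s₁/2} := rfl
      rw [this]
      exact isClosed_Icc.inter (isClosed_le hucont continuous_const)
    have hTbdd : BddBelow T := ⟨y, fun t ht => ht.1.1⟩
    set b : ℝ := sInf T with hb_def
    have hbT : b ∈ T := hTclosed.csInf_mem ⟨r, hTr⟩ hTbdd
    have hb_y : y ≤ b := hbT.1.1
    have hb_r : b ≤ r := hbT.1.2
    have hub : u b ≤ s₁/2 := hbT.2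
    have hyb : y < b := by
      rcases lt_or_eq_of_le hb_y with h | h
      · exact h
      · exfalso; rw [← h] at hub; linarith
    -- last time before b that u is at least s₁
    set T2 : Set ℝ := {t : ℝ | t ∈ Icc y b ∧ s₁ ≤ u t} with hT2_def
    have hT2y : y ∈ T2 := ⟨⟨le_rfl, hb_y⟩, hcon⟩
    have hT2closed : IsClosed T2 := by
      have : T2 = Icc y b ∩ {t : ℝ | s₁ ≤ u t} := rfl
      rw [this]
      exact isClosed_Icc.inter (isClosed_le continuous_const hucont)
    have hT2bdd : BddAbove T2 := ⟨b, fun t ht => ht.1.2⟩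
    set a : ℝ := sSup T2 with ha_def
    have haT2 : a ∈ T2 := hT2closed.csSup_mem ⟨y, hT2y⟩ hT2bdd
    have ha_y : y ≤ a := haT2.1.1
    have ha_b : a ≤ b := haT2.1.2
    have hua : s₁ ≤ u a := haT2.2
    have hab : a < b := by
      rcases lt_or_eq_of_le ha_b with h | h
      · exact h
      · exfalso; rw [h] at hua; linarith
    -- on (a,b) the solution is in the band
    have hmid : ∀ t : ℝ, a < t → t < b → s₁/2 < u t ∧ u t < s₁ := by
      intro t h1 h2
      constructor
      · by_contra hc
        push_neg at hc
        have : t ∈ T := ⟨⟨le_trans ha_y h1.le, le_trans h2.le hb_r⟩, hc⟩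
        have := csInf_le hTbdd this
        rw [← hb_def] at this
        linarith
      · by_contra hc
        push_neg at hc
        have : t ∈ T2 := ⟨⟨le_trans ha_y h1.le, h2.le⟩, hc⟩
        have := le_csSup hT2bdd this
        rw [← ha_def] at this
        linarith
    have hIoosub : Ioo a b ⊆ Ioo (-r) r := by
      intro t ht
      exact ⟨by linarith [ht.1, ha_y], lt_of_lt_of_le ht.2 hb_r⟩
    -- mean value theorem
    obtain ⟨ξ, hξ, hslope⟩ := exists_hasDerivAt_eq_slope u (deriv u) hab
      (hucont.continuousOn) (fun t ht => hud t (hIoosub ht))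
    have hξS : ξ ∈ Ioo (-r) r := hIoosub hξ
    have hξband : u ξ ∈ Icc (s₁/2) s₁ := by
      obtain ⟨h1, h2⟩ := hmid ξ hξ.1 hξ.2
      exact ⟨h1.le, h2.le⟩
    have hFIξ := hFI ξ hξS.1 hξS.2
    have hQξ : Q (u ξ) ≤ Q z₀ := hz₀max' (u ξ) hξband
    have hR₀ξ : -(R₀ * u ξ) ≤ M * s₁ := by
      have h1 : |R₀ * u ξ| ≤ M * s₁ := by
        rw [abs_mul]
        apply mul_le_mul hR₀M _ (abs_nonneg _) hM.le
        rw [abs_of_nonneg (le_trans (by linarith : (0:ℝ) ≤ s₁/2) hξband.1)]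
        exact hξband.2
      linarith [neg_abs_le (R₀ * u ξ), abs_nonneg (R₀ * u ξ)]
    have hderivsq : (deriv u ξ)^2 ≤ G^2 := by
      rw [hFIξ]
      linarith
    have habs : |deriv u ξ| ≤ G := by
      rw [← Real.sqrt_sq_eq_abs]
      calc Real.sqrt ((deriv u ξ)^2) ≤ Real.sqrt (G^2) := Real.sqrt_le_sqrt hderivsq
        _ = G := Real.sqrt_sq hG0.le
    -- contradiction via slope
    have hba : b - a < δ := by
      have : b - a ≤ r - y := by linarith
      linarith
    have hslope2 : u b - u a = deriv u ξ * (b - a) := by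
      have hne : b - a ≠ 0 := by linarith
      rw [hslope]
      field_simp
    have h1 : s₁/2 ≤ u a - u b := by linarith [hξband]
    have h2 : u a - u b ≤ |deriv u ξ| * (b - a) := by
      have h2a := mul_le_mul_of_nonneg_right (neg_le_abs (deriv u ξ))
        (le_of_lt (sub_pos.2 hab))
      linarith only [h2a, hslope2]
    have h3 : |deriv u ξ| * (b - a) ≤ G * (b - a) :=
      mul_le_mul_of_nonneg_right habs (by linarith)
    have h4 : G * (b - a) < G * δ := mul_lt_mul_of_pos_left hba hG0
    have h5 : G * δ = s₁/4 := by rw [hδ_def]; field_simp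
    linarith
  -- the interval (r-δ, r) is inside the positivity set
  have hrδ : δ ≤ r := by
    by_contra hcontra
    push_neg at hcontra
    have h0mem : 0 < u 0 := by rw [hu0]; exact hu₀pos
    have := hclaim1 0 (by linarith) hr h0mem
    rw [hu0] at this
    have : 1/K ≤ s₁ := le_trans hKu₀ this.le
    have h2K : 1/(2*K) < 1/K := by
      rw [div_lt_div_iff₀ (by positivity) hK0]; nlinarith only [hK0]
    linarith [hs₁K]
  have hx0 : 0 < x := lt_of_le_of_lt (by linarith) hx1
  have hxS : x ∈ Ioo (-r) r := ⟨by linarith, hx2⟩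
  have hux : 0 < u x := (hiff x).2 ⟨hxS.1, hxS.2⟩
  have hsmall : ∀ t : ℝ, x ≤ t → t < r → 0 < u t ∧ u t < s₁ := by
    intro t h1 h2
    have hut : 0 < u t := (hiff t).2 ⟨by linarith, h2⟩
    exact ⟨hut, hclaim1 t (by linarith) h2 hut⟩
  -- coercive lower bound for the derivative squared along the tail
  have hFIlow : ∀ t : ℝ, x ≤ t → t < r →
      2 * (A/4 * (u t) ^ (1-m)) ≤ (deriv u t)^2 := by
    intro t h1 h2
    obtain ⟨hut, huts⟩ := hsmall t h1 h2
    have := hP1 R₀ hR₀M (u t) hut huts.le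
    rw [hFI t (by linarith) h2]
    linarith
  have hune : ∀ t : ℝ, x ≤ t → t < r → deriv u t ≠ 0 := by
    intro t h1 h2 hzero
    have h3 := hFIlow t h1 h2
    rw [hzero] at h3
    have hut := (hsmall t h1 h2).1
    have : (0:ℝ) < 2 * (A/4 * (u t) ^ (1-m)) := by positivity
    simp at h3
    linarith
  -- the derivative is negative on the tail
  have hsign : ∀ t : ℝ, x ≤ t → t < r → deriv u t < 0 := by
    by_contra hc
    push_neg at hc
    obtain ⟨t, ht1, ht2, htge⟩ := hc
    have htpos : 0 < deriv u t := lt_of_le_of_ne htge (Ne.symm (hune t ht1 ht2))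
    have hpos' : ∀ s : ℝ, t ≤ s → s < r → 0 < deriv u s := by
      intro s hs1 hs2
      rcases lt_trichotomy (deriv u s) 0 with h | h | h
      · exfalso
        have hts : t ≠ s := fun he => by rw [← he] at h; linarith
        have hts' : t < s := lt_of_le_of_ne hs1 hts
        have hsub : Icc t s ⊆ Ioo (-r) r := by
          intro z hz
          exact ⟨by linarith [hz.1], lt_of_le_of_lt hz.2 hs2⟩
        have hcont' : ContinuousOn (deriv u) (Icc t s) := hu'cont.mono hsub
        have h0mem : (0:ℝ) ∈ Icc (deriv u s) (deriv u t) := ⟨h.le, htpos.le⟩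
        obtain ⟨z, hzmem, hz0⟩ := intermediate_value_Icc' hts'.le hcont' h0mem
        exact hune z (le_trans ht1 hzmem.1) (lt_of_le_of_lt hzmem.2 hs2) hz0
      · exact absurd h (hune s (le_trans ht1 hs1) hs2)
      · exact h
    set t₁ : ℝ := (t + r)/2 with ht₁_def
    have ht₁1 : t < t₁ := by rw [ht₁_def]; linarith
    have ht₁2 : t₁ < r := by rw [ht₁_def]; linarith
    have hmono : ∀ t' : ℝ, t₁ < t' → t' < r → u t₁ < u t' := by
      intro t' h1 h2
      have hsm := strictMonoOn_of_deriv_pos (convex_Icc t t')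
        (hucont.continuousOn) (fun z hz => by
          rw [interior_Icc] at hz
          exact hpos' z hz.1.le (lt_trans hz.2 h2))
      exact hsm ⟨ht₁1.le, by linarith⟩ ⟨by linarith, le_rfl⟩ h1
    have hNB : (nhdsWithin r (Ioo t₁ r)).NeBot := by
      rw [nhdsWithin_Ioo_eq_nhdsLT ht₁2]
      infer_instance
    have htendu : Filter.Tendsto u (nhdsWithin r (Ioo t₁ r)) (nhds (u r)) :=
      (hucont.continuousAt).continuousWithinAt.tendsto
    have hev : ∀ᶠ t' in nhdsWithin r (Ioo t₁ r), u t₁ ≤ u t' :=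
      eventually_mem_nhdsWithin.mono (fun t' ht' => (hmono t' ht'.1 ht'.2).le)
    have hle := ge_of_tendsto htendu hev
    have ht₁pos : 0 < u t₁ := (hiff t₁).2 ⟨by linarith, ht₁2⟩
    rw [hur] at hle
    linarith
  -- the comparison function
  set v : ℝ → ℝ := fun t => (u t) ^ (p:ℝ) with hv_def
  have hvcont : Continuous v := by
    apply hucont.rpow_const
    intro t; right; linarith
  have hvd : ∀ t ∈ Ioo x r, HasDerivAt v (deriv u t * p * (u t) ^ (p-1)) t := by
    intro t ht
    have hut : 0 < u t := (hsmall t ht.1.le ht.2).1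
    exact (hud t ⟨by linarith [ht.1], ht.2⟩).rpow_const (Or.inl (ne_of_gt hut))
  set w : ℝ → ℝ := fun t => v t + c₀ * t with hw_def
  have hwcont : Continuous w := hvcont.add (continuous_const.mul continuous_id)
  have hwd : ∀ t ∈ Ioo x r, HasDerivAt w (deriv u t * p * (u t) ^ (p-1) + c₀) t := by
    intro t ht
    exact (hvd t ht).add ((hasDerivAt_id t).const_mul c₀ |>.congr_deriv (by ring))
  -- derivative of w is nonpositive on (x,r)
  have hwderiv : ∀ t ∈ interior (Icc x r), deriv w t ≤ 0 := by
    intro t ht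
    rw [interior_Icc] at ht
    rw [(hwd t ht).deriv]
    have ht1 : x ≤ t := ht.1.le
    have ht2 : t < r := ht.2
    have hut : 0 < u t := (hsmall t ht1 ht2).1
    have hdun : deriv u t < 0 := hsign t ht1 ht2
    set X : ℝ := -(deriv u t) * p * (u t) ^ (p-1) with hX_def
    have hXpos : 0 < X := by
      rw [hX_def]
      have h1 : 0 < -(deriv u t) := by linarith
      exact mul_pos (mul_pos h1 hp0) (Real.rpow_pos_of_pos hut _)
    have h2exp : ((u t) ^ (p-1))^(2:ℕ) = (u t) ^ (m-1) := by
      rw [← Real.rpow_natCast ((u t) ^ (p-1)) 2, ← Real.rpow_mul hut.le]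
      norm_num
      rw [hp_def]
      ring_nf
    have hprod : (u t) ^ ((1:ℝ)-m) * (u t) ^ (m-1) = 1 := by
      rw [← Real.rpow_add hut]
      norm_num
    have hump : (0:ℝ) < (u t) ^ (m-1) := Real.rpow_pos_of_pos hut _
    have hF2 : A/2 * p^2 ≤ (deriv u t)^2 * p^2 * (u t)^(m-1) := by
      have hmul := mul_le_mul_of_nonneg_right (hFIlow t ht1 ht2)
        (by positivity : (0:ℝ) ≤ p^2 * (u t)^(m-1))
      calc A/2 * p^2 = A/2 * p^2 * ((u t) ^ ((1:ℝ)-m) * (u t) ^ (m-1)) := by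
            rw [hprod]; ring
        _ = (2 * (A/4 * (u t) ^ (1-m))) * (p^2 * (u t)^(m-1)) := by ring
        _ ≤ (deriv u t)^2 * (p^2 * (u t)^(m-1)) := hmul
        _ = (deriv u t)^2 * p^2 * (u t)^(m-1) := by ring
    have hXsq : A/2 ≤ X^2 := by
      have e1 : X^2 = (deriv u t)^2 * p^2 * (u t)^(m-1) := by
        rw [hX_def, ← h2exp]; ring
      rw [e1]
      have hp2 : 1 ≤ p^2 := by nlinarith only [hp1]
      nlinarith only [hp2, hA, hF2]
    have hc₀X : c₀ ≤ X := by
      calc c₀ = Real.sqrt (A/2) := hc₀_def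
        _ ≤ Real.sqrt (X^2) := Real.sqrt_le_sqrt hXsq
        _ = |X| := Real.sqrt_sq_eq_abs X
        _ = X := abs_of_pos hXpos
    have : deriv u t * p * (u t) ^ (p-1) = -X := by rw [hX_def]; ring
    rw [this]
    linarith
  have hwdiff : DifferentiableOn ℝ w (interior (Icc x r)) := by
    rw [interior_Icc]
    exact fun t ht => ((hwd t ht).differentiableAt).differentiableWithinAt
  have hanti := antitoneOn_of_deriv_nonpos (convex_Icc x r)
    hwcont.continuousOn hwdiff hwderiv
  have hwr : w r ≤ w x := hanti ⟨le_rfl, hx2.le⟩ ⟨hx2.le, le_rfl⟩ hx2.le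
  have hvr : v r = 0 := by
    simp only [hv_def]
    rw [hur]
    exact Real.zero_rpow (ne_of_gt hp0)
  have hkey : c₀ * (r - x) ≤ v x := by
    simp only [hw_def] at hwr
    linarith [hwr, hvr]
  -- conclude
  by_contra hfin
  push_neg at hfin
  have hrx : 0 ≤ r - x := by linarith
  have hCrx : 0 ≤ c₀ ^ q * (r-x) ^ q := by positivity
  have h1 : (u x)^(p:ℝ) < (c₀ ^ q * (r-x) ^ q)^(p:ℝ) :=
    Real.rpow_lt_rpow (hupos x) hfin hp0
  have h2 : (c₀ ^ q * (r-x) ^ q)^(p:ℝ) = c₀ * (r-x) := by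
    rw [Real.mul_rpow (Real.rpow_nonneg hc₀.le q) (Real.rpow_nonneg hrx q),
      ← Real.rpow_mul hc₀.le, ← Real.rpow_mul hrx, hqp, Real.rpow_one,
      Real.rpow_one]
  rw [h2] at h1
  have hvx : v x = (u x)^(p:ℝ) := by simp only [hv_def]
  linarith [hkey, h1, hvx]
end
end
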